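/- arXiv:2405.13140 — 4 statements merged into one kernel-verified Lean document; each statement's English description precedes it below -/
import Mathlib

section
/- Let η > 0, d ≥ 1, and let f : ℝ → ℝ^d be continuously differentiable with ‖f'(s)‖₂ ≤ M for all s ∈ [0, η]. Then ‖ ∫₀^η ∫₀^t f(s) ds dt − (η/2) ∫₀^η f(s) ds ‖₂ ≤ M η³ / 12. -/
open intervalIntegral

set_option maxHeartbeats 1000000 in
/-- Quantitative bound for the difference between the iterated integral over the triangle and
half the full rectangle integral, for a vector-valued continuously differentiable `f`. -/
theorem stmt3 {d : ℕ} (hd : 1 ≤ d) {η M : ℝ} (hη : 0 < η)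
    {f : ℝ → EuclideanSpace ℝ (Fin d)} (hf : ContDiff ℝ 1 f)
    (hM : ∀ s ∈ Set.Icc (0:ℝ) η, ‖deriv f s‖ ≤ M) :
    ‖(∫ t in (0:ℝ)..η, ∫ s in (0:ℝ)..t, f s) - (η / 2) • ∫ s in (0:ℝ)..η, f s‖
      ≤ M * η ^ 3 / 12 := by
  have hfc : Continuous f := hf.continuous
  set F : ℝ → EuclideanSpace ℝ (Fin d) := fun t => ∫ s in (0:ℝ)..t, f s with hFdef
  have hF : ∀ t : ℝ, HasDerivAt F (f t) t := fun t =>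
    intervalIntegral.integral_hasDerivAt_right (hfc.intervalIntegrable _ _)
      (hfc.stronglyMeasurableAtFilter _ _) hfc.continuousAt
  have hFc : Continuous F := continuous_iff_continuousAt.2 fun t => (hF t).continuousAt
  -- integration by parts: ∫ F = η • F η - ∫ t • f t
  have hu : ∀ t : ℝ, HasDerivAt (fun t : ℝ => t • F t) (F t + t • f t) t := by
    intro t
    have := (hasDerivAt_id t).smul (hF t)
    exact (by simpa [add_comm] using this : HasDerivAt (id • F) (F t + t • f t) t)
  have key1 : (∫ t in (0:ℝ)..η, (F t + t • f t)) = η • F η - (0:ℝ) • F 0 :=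
    intervalIntegral.integral_eq_sub_of_hasDerivAt (fun t _ => hu t)
      ((hFc.add (continuous_id.smul hfc)).intervalIntegrable _ _)
  have hintF : IntervalIntegrable F MeasureTheory.volume 0 η := hFc.intervalIntegrable _ _
  have hinttf : IntervalIntegrable (fun t : ℝ => t • f t) MeasureTheory.volume 0 η :=
    (continuous_id.smul hfc).intervalIntegrable _ _
  have key1' : (∫ t in (0:ℝ)..η, F t) = η • F η - ∫ t in (0:ℝ)..η, t • f t := by
    rw [intervalIntegral.integral_add hintF hinttf] at key1
    simp only [zero_smul, sub_zero] at key1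
    exact eq_sub_of_add_eq key1
  -- rewrite the difference as ∫ (η/2 - t) • f t
  have key2 : (∫ t in (0:ℝ)..η, F t) - (η / 2) • F η
      = ∫ t in (0:ℝ)..η, (η / 2 - t) • f t := by
    have h1 : (η / 2) • F η = ∫ t in (0:ℝ)..η, (η / 2) • f t :=
      (intervalIntegral.integral_smul (η / 2) f).symm
    have h2 : (∫ t in (0:ℝ)..η, (η / 2 - t) • f t)
        = (∫ t in (0:ℝ)..η, (η / 2) • f t) - ∫ t in (0:ℝ)..η, t • f t := by
      rw [← intervalIntegral.integral_sub (show IntervalIntegrable (fun t : ℝ => (η / 2) • f t) MeasureTheory.volume 0 η from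
          ((continuous_const (y := η / 2)).smul hfc).intervalIntegrable _ _)
        hinttf]
      congr 1; funext t; rw [sub_smul]
    rw [key1', h2, ← h1]
    module
  -- subtract the constant f (η/2)
  have key3 : (∫ t in (0:ℝ)..η, ((η / 2) - t) • f t)
      = ∫ t in (0:ℝ)..η, ((η / 2) - t) • (f t - f (η / 2)) := by
    have hA : IntervalIntegrable (fun t : ℝ => ((η / 2) - t) • f t) MeasureTheory.volume 0 η :=
      (((continuous_const.sub continuous_id).smul hfc).intervalIntegrable _ _ : _)
    have hB : IntervalIntegrable (fun t : ℝ => ((η / 2) - t) • f (η / 2)) MeasureTheory.volume 0 η :=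
      (((continuous_const.sub continuous_id).smul continuous_const).intervalIntegrable _ _ : _)
    have h2 : (∫ t in (0:ℝ)..η, ((η / 2) - t) • (f t - f (η / 2)))
        = (∫ t in (0:ℝ)..η, ((η / 2) - t) • f t) - ∫ t in (0:ℝ)..η, ((η / 2) - t) • f (η / 2) := by
      rw [← intervalIntegral.integral_sub hA hB]
      congr 1; funext t; rw [smul_sub]
    have h3 : (∫ t in (0:ℝ)..η, ((η / 2) - t) • f (η / 2))
        = (∫ t in (0:ℝ)..η, ((η / 2) - t)) • f (η / 2) := intervalIntegral.integral_smul_const _ _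
    have h4 : (∫ t in (0:ℝ)..η, ((η / 2) - t)) = 0 := by
      rw [intervalIntegral.integral_sub intervalIntegrable_const
        (intervalIntegral.intervalIntegrable_id)]
      simp
      ring
    rw [h2, h3, h4, zero_smul, sub_zero]
  -- Lipschitz bound
  have hM0 : 0 ≤ M := le_trans (norm_nonneg _) (hM 0 ⟨le_rfl, hη.le⟩)
  have hderiv : ∀ x ∈ Set.Icc (0:ℝ) η, HasDerivWithinAt f (deriv f x) (Set.Icc (0:ℝ) η) x :=
    fun x _ => ((hf.differentiable one_ne_zero) x).hasDerivAt.hasDerivWithinAt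
  have hlip : ∀ t ∈ Set.Icc (0:ℝ) η, ‖f t - f (η / 2)‖ ≤ M * |t - (η / 2)| := by
    intro t ht
    have hcmem : (η / 2) ∈ Set.Icc (0:ℝ) η := ⟨by positivity, by linarith⟩
    have := (convex_Icc (0:ℝ) η).norm_image_sub_le_of_norm_hasDerivWithin_le
      hderiv hM hcmem ht
    simpa [Real.norm_eq_abs] using this
  -- norm bound for the integral
  have hbound : ∀ t ∈ Set.Icc (0:ℝ) η, ‖((η / 2) - t) • (f t - f (η / 2))‖ ≤ M * (t - (η / 2)) ^ 2 := by
    intro t ht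
    rw [norm_smul, Real.norm_eq_abs]
    calc |(η / 2) - t| * ‖f t - f (η / 2)‖ ≤ |(η / 2) - t| * (M * |t - (η / 2)|) := by
          apply mul_le_mul_of_nonneg_left (hlip t ht) (abs_nonneg _)
      _ = M * (t - (η / 2)) ^ 2 := by
          rw [abs_sub_comm, ← sq_abs]; ring
  have hnorm : ‖∫ t in (0:ℝ)..η, ((η / 2) - t) • (f t - f (η / 2))‖
      ≤ ∫ t in (0:ℝ)..η, M * (t - (η / 2)) ^ 2 := by
    apply le_trans (intervalIntegral.norm_integral_le_integral_norm hη.le)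
    apply intervalIntegral.integral_mono_on hη.le
    · exact (((continuous_const.sub continuous_id).smul
        (hfc.sub continuous_const)).norm).intervalIntegrable _ _
    · exact (continuous_const.mul ((continuous_id.sub continuous_const).pow 2)).intervalIntegrable _ _
    · exact hbound
  -- compute the final integral
  have hval : (∫ t in (0:ℝ)..η, M * (t - (η / 2)) ^ 2) = M * η ^ 3 / 12 := by
    rw [intervalIntegral.integral_const_mul]
    have h : (∫ t in (0:ℝ)..η, (t - η / 2) ^ 2)
        = ∫ t in (0 - η / 2)..(η - η / 2), t ^ 2 :=
      intervalIntegral.integral_comp_sub_right (f := fun t : ℝ => t ^ 2) (η / 2)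
    rw [h, integral_pow]
    ring
  calc ‖(∫ t in (0:ℝ)..η, F t) - (η / 2) • F η‖
      = ‖∫ t in (0:ℝ)..η, ((η / 2) - t) • (f t - f (η / 2))‖ := by rw [key2, key3]
    _ ≤ ∫ t in (0:ℝ)..η, M * (t - (η / 2)) ^ 2 := hnorm
    _ = M * η ^ 3 / 12 := hval
end

section
/- Let η > 0, let U : ℝ^d → ℝ be continuously differentiable, let V : ℝ^d → ℝ be three times continuously differentiable, let Q, P : [0, η] → ℝ^d be continuously differentiable and satisfy Q'(t) = ∇V(P(t)), P'(t) = −∇U(Q(t)), Q(0) = q, P(0) = p, and let q̂ = q + η∇V(p − (η/2)∇U(q)) be the position component of the one-step leapfrog update. Then q̂ − Q(η) = ∫₀^η ∫₀¹ ∇²V( s(p − (η/2)∇U(q)) + (1−s)P(t) ) ( ∫₀^t (∇U(Q(τ)) − ∇U(q)) dτ ) ds dt − ∫₀¹ ∫₀^η (1−s)·(τ/2)(η−τ)· w(s,τ) dτ ds, where w(s,τ) ∈ ℝ^d is the vector whose k-th component equals Σ_{i,j=1}^d ∂³V/∂x_i∂x_j∂x_k ( s(p − (η/2)∇U(q)) +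 (1−s)P(τ) ) · (∇U(Q(τ)))_i · (∇U(q))_j. -/
noncomputable section

open MeasureTheory intervalIntegral Set InnerProductSpace

section Aux

variable {d : ℕ}
local notation "E" => EuclideanSpace ℝ (Fin d)

lemma euc_dual_symm_apply (L : StrongDual ℝ E) (k : Fin d) :
    (toDual ℝ E).symm L k = L (EuclideanSpace.single k 1) := by
  have h1 : (inner ℝ ((toDual ℝ E).symm L) (EuclideanSpace.single k (1:ℝ)) : ℝ)
      = (toDual ℝ E).symm L k := by
    rw [EuclideanSpace.inner_single_right]; simp
  rw [← h1, toDual_symm_apply]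

lemma contDiff_gradient' {n : WithTop ℕ∞} {f : E → ℝ} (hf : ContDiff ℝ (n + 1) f) :
    ContDiff ℝ n (gradient f) := by
  have h : gradient f = ⇑(toDual ℝ E).symm ∘ fderiv ℝ f := rfl
  rw [h]
  exact ((toDual ℝ E).symm.contDiff).comp (hf.fderiv_right le_rfl)

lemma fderiv3_apply (f : E → ℝ) (x a b c : E) :
    iteratedFDeriv ℝ 3 f x ![a, b, c] = fderiv ℝ (fderiv ℝ (fderiv ℝ f)) x a b c := by
  have h := iteratedFDeriv_succ_apply_right (𝕜 := ℝ) (n := 2) (f := f) (x := x) ![a, b, c]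
  rw [h, iteratedFDeriv_two_apply]
  congr 1

lemma euc_repr (x : E) : (∑ i, x i • EuclideanSpace.single i (1:ℝ)) = x := by
  ext j
  rw [WithLp.ofLp_sum, Finset.sum_apply]
  simp [EuclideanSpace.single_apply]

lemma clm3_expand (T : E →L[ℝ] E →L[ℝ] E →L[ℝ] ℝ) (u v e : E) :
    T u v e = ∑ i, ∑ j,
      T (EuclideanSpace.single i 1) (EuclideanSpace.single j 1) e * u i * v j := by
  conv_lhs => rw [← euc_repr u, ← euc_repr v]
  simp only [map_sum, _root_.map_smul, ContinuousLinearMap.sum_apply,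
    ContinuousLinearMap.smul_apply, smul_eq_mul, Finset.mul_sum]
  rw [Finset.sum_comm]
  exact Finset.sum_congr rfl fun i _ => Finset.sum_congr rfl fun j _ => by ring

lemma interval_fubini {X : Type*} [NormedAddCommGroup X] [NormedSpace ℝ X]
    {f : ℝ → ℝ → X} {a b c e : ℝ} (hab : a ≤ b) (hce : c ≤ e)
    (hf : ContinuousOn (fun p : ℝ × ℝ => f p.1 p.2) (Icc a b ×ˢ Icc c e)) :
    ∫ t in a..b, ∫ s in c..e, f t s = ∫ s in c..e, ∫ t in a..b, f t s := by
  have hInt : Integrable (Function.uncurry f)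
      ((volume.restrict (Ioc a b)).prod (volume.restrict (Ioc c e))) := by
    rw [Measure.prod_restrict]
    have h1 : IntegrableOn (Function.uncurry f) (Icc a b ×ˢ Icc c e) (volume.prod volume) := by
      rw [← Measure.volume_eq_prod]
      exact hf.integrableOn_compact (isCompact_Icc.prod isCompact_Icc)
    exact h1.mono_set (Set.prod_mono Ioc_subset_Icc_self Ioc_subset_Icc_self)
  simp only [intervalIntegral.integral_of_le hab, intervalIntegral.integral_of_le hce]
  exact MeasureTheory.integral_integral_swap hInt

end Aux

set_option maxHeartbeats 2000000 in
/-- Exact decomposition of the position error of one leapfrog step versus the exact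
Hamiltonian flow, for general kinetic energy `V`. -/
theorem stmt4 {d : ℕ} {η : ℝ} (hη : 0 < η)
    {U V : EuclideanSpace ℝ (Fin d) → ℝ}
    (hU : ContDiff ℝ 1 U) (hV : ContDiff ℝ 3 V)
    (q p : EuclideanSpace ℝ (Fin d))
    (Q P : ℝ → EuclideanSpace ℝ (Fin d))
    (hQ' : ∀ t ∈ Set.Icc (0:ℝ) η, HasDerivAt Q (gradient V (P t)) t)
    (hP' : ∀ t ∈ Set.Icc (0:ℝ) η, HasDerivAt P (-(gradient U (Q t))) t)
    (hQ0 : Q 0 = q) (hP0 : P 0 = p)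
    (w : ℝ → ℝ → EuclideanSpace ℝ (Fin d))
    (hw : ∀ s τ : ℝ, ∀ k : Fin d, w s τ k =
      ∑ i, ∑ j,
        iteratedFDeriv ℝ 3 V (s • (p - (η / 2) • gradient U q) + (1 - s) • P τ)
            ![EuclideanSpace.single i 1, EuclideanSpace.single j 1, EuclideanSpace.single k 1]
          * gradient U (Q τ) i * gradient U q j) :
    q + η • gradient V (p - (η / 2) • gradient U q) - Q η
      = (∫ t in (0:ℝ)..η, ∫ s in (0:ℝ)..1,
            (fderiv ℝ (gradient V) (s • (p - (η / 2) • gradient U q) + (1 - s) • P t))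
              (∫ τ in (0:ℝ)..t, (gradient U (Q τ) - gradient U q)))
        - ∫ s in (0:ℝ)..1, ∫ τ in (0:ℝ)..η, ((1 - s) * (τ / 2 * (η - τ))) • w s τ := by
  classical
  have h0η : (0:ℝ) ≤ η := hη.le
  have huIcc : uIcc (0:ℝ) η = Icc 0 η := uIcc_of_le h0η
  have huIcc1 : uIcc (0:ℝ) 1 = Icc 0 1 := uIcc_of_le zero_le_one
  let ι : StrongDual ℝ (EuclideanSpace ℝ (Fin d)) ≃ₗᵢ[ℝ] EuclideanSpace ℝ (Fin d) :=
    (toDual ℝ (EuclideanSpace ℝ (Fin d))).symm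
  have hιapp : ∀ (L : StrongDual ℝ (EuclideanSpace ℝ (Fin d))) (k : Fin d),
      ι L k = L (EuclideanSpace.single k 1) := fun L k => euc_dual_symm_apply L k
  set g : (EuclideanSpace ℝ (Fin d)) := gradient U q with hgdef
  set xs : (EuclideanSpace ℝ (Fin d)) := p - (η / 2) • g with hxsdef
  -- smoothness facts
  have hGU : Continuous (gradient U) := by
    have h : gradient U = ⇑ι ∘ fderiv ℝ U := rfl
    rw [h]; exact ι.continuous.comp (hU.continuous_fderiv one_ne_zero)
  have hGV2 : ContDiff ℝ 2 (gradient V) := by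
    apply contDiff_gradient' (n := 2)
    rw [show ((2 : WithTop ℕ∞) + 1) = 3 by norm_num]
    exact hV
  have hGVd : Differentiable ℝ (gradient V) := hGV2.differentiable (by norm_num)
  have hDGV1 : ContDiff ℝ 1 (fderiv ℝ (gradient V)) := hGV2.fderiv_right (by norm_num)
  have hDGVc : Continuous (fderiv ℝ (gradient V)) := hDGV1.continuous
  have hA1 : ContDiff ℝ 1 (fderiv ℝ (fderiv ℝ V)) := by
    have h2 : ContDiff ℝ 2 (fderiv ℝ V) := hV.fderiv_right (by norm_num)
    exact h2.fderiv_right (by norm_num)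
  have hAd : Differentiable ℝ (fderiv ℝ (fderiv ℝ V)) := hA1.differentiable one_ne_zero
  set T := fderiv ℝ (fderiv ℝ (fderiv ℝ V)) with hTdef
  have hTc : Continuous T := hA1.continuous_fderiv one_ne_zero
  have hPc : ContinuousOn P (Icc 0 η) := fun t ht => (hP' t ht).continuousAt.continuousWithinAt
  have hQc : ContinuousOn Q (Icc 0 η) := fun t ht => (hQ' t ht).continuousAt.continuousWithinAt
  -- derivative of x ↦ fderiv (gradient V) x g
  have hDGVeq : ∀ y : (EuclideanSpace ℝ (Fin d)), fderiv ℝ (gradient V) y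
      = (ι : StrongDual ℝ (EuclideanSpace ℝ (Fin d)) →L[ℝ] EuclideanSpace ℝ (Fin d)).comp
          (fderiv ℝ (fderiv ℝ V) y) := by
    intro y
    have h : gradient V = ⇑ι ∘ fderiv ℝ V := rfl
    rw [h, LinearIsometryEquiv.comp_fderiv]
  have hΦdiff : ∀ x : (EuclideanSpace ℝ (Fin d)), HasFDerivAt (fun y => (fderiv ℝ (gradient V) y) g)
      (((ι : StrongDual ℝ (EuclideanSpace ℝ (Fin d)) →L[ℝ] EuclideanSpace ℝ (Fin d)).comp
        ((ContinuousLinearMap.apply ℝ ((EuclideanSpace ℝ (Fin d)) →L[ℝ] ℝ) g).comp (T x)))) x := by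
    intro x
    have h1 : HasFDerivAt (fderiv ℝ (fderiv ℝ V)) (T x) x := (hAd x).hasFDerivAt
    have h2 := HasFDerivAt.comp (x := x) (f := fderiv ℝ (fderiv ℝ V)) ((ContinuousLinearMap.apply ℝ ((EuclideanSpace ℝ (Fin d)) →L[ℝ] ℝ) g).hasFDerivAt) h1
    have h3 := HasFDerivAt.comp (x := x) (((ι : StrongDual ℝ (EuclideanSpace ℝ (Fin d)) →L[ℝ] EuclideanSpace ℝ (Fin d))).hasFDerivAt) h2
    have h4 : (fun y => (fderiv ℝ (gradient V) y) g)
        = fun y => (ι : StrongDual ℝ (EuclideanSpace ℝ (Fin d)) →L[ℝ] EuclideanSpace ℝ (Fin d))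
            ((fderiv ℝ (fderiv ℝ V) y) g) := by
      funext y; rw [hDGVeq y]; rfl
    rw [h4]
    exact h3
  -- identification with w
  have hwξ : ∀ s t : ℝ,
      ι (((T (s • xs + (1 - s) • P t)) (gradient U (Q t))) g) = w s t := by
    intro s t
    ext k
    rw [hιapp, hw s t k]
    rw [clm3_expand]
    refine Finset.sum_congr rfl fun i _ => Finset.sum_congr rfl fun j _ => ?_
    rw [fderiv3_apply]
  -- Step 1 : FTC for Q
  have hQint : IntervalIntegrable (fun t => gradient V (P t)) volume 0 η := by
    apply ContinuousOn.intervalIntegrable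
    rw [huIcc]
    exact hGV2.continuous.comp_continuousOn hPc
  have key1 : ∫ t in (0:ℝ)..η, gradient V (P t) = Q η - q := by
    rw [← hQ0]
    exact integral_eq_sub_of_hasDerivAt (fun t ht => hQ' t (huIcc ▸ ht)) hQint
  -- Step 2 : expression for P
  have hPeq : ∀ t ∈ Icc (0:ℝ) η, P t = p - ∫ τ in (0:ℝ)..t, gradient U (Q τ) := by
    intro t ht
    have hsub : uIcc (0:ℝ) t ⊆ Icc 0 η := by
      rw [uIcc_of_le ht.1]; exact Icc_subset_Icc le_rfl ht.2
    have hint : IntervalIntegrable (fun τ => -(gradient U (Q τ))) volume 0 t :=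
      ((hGU.comp_continuousOn (hQc.mono hsub)).neg).intervalIntegrable
    have hval := integral_eq_sub_of_hasDerivAt (fun τ hτ => hP' τ (hsub hτ)) hint
    rw [hP0, intervalIntegral.integral_neg] at hval
    have h5 : P t - p = -∫ τ in (0:ℝ)..t, gradient U (Q τ) := hval.symm
    have h6 : P t = p + -∫ τ in (0:ℝ)..t, gradient U (Q τ) := by rw [← h5]; abel
    rw [h6, sub_eq_add_neg]
  -- Step 3 : decomposition of xs - P t
  have hI : ∀ t ∈ Icc (0:ℝ) η, xs - P t
      = (∫ τ in (0:ℝ)..t, (gradient U (Q τ) - g)) + (t - η / 2) • g := by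
    intro t ht
    have hsub : uIcc (0:ℝ) t ⊆ Icc 0 η := by
      rw [uIcc_of_le ht.1]; exact Icc_subset_Icc le_rfl ht.2
    have hint1 : IntervalIntegrable (fun τ => gradient U (Q τ)) volume 0 t :=
      (hGU.comp_continuousOn (hQc.mono hsub)).intervalIntegrable
    rw [intervalIntegral.integral_sub hint1 intervalIntegrable_const,
      intervalIntegral.integral_const, hPeq t ht, hxsdef]
    module
  -- Step 4 : pointwise FTC in s
  have pointeq : ∀ t ∈ Icc (0:ℝ) η,
      gradient V xs - gradient V (P t)
        = (∫ s in (0:ℝ)..1, (fderiv ℝ (gradient V) (s • xs + (1 - s) • P t))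
            (∫ τ in (0:ℝ)..t, (gradient U (Q τ) - g)))
          + (t - η / 2) •
            (∫ s in (0:ℝ)..1, (fderiv ℝ (gradient V) (s • xs + (1 - s) • P t)) g) := by
    intro t ht
    have hline : ∀ s : ℝ, HasDerivAt (fun s : ℝ => gradient V (P t + s • (xs - P t)))
        ((fderiv ℝ (gradient V) (P t + s • (xs - P t))) (xs - P t)) s := by
      intro s
      have h1 : HasDerivAt (fun s : ℝ => P t + s • (xs - P t)) (xs - P t) s := by
        simpa using ((hasDerivAt_id s).smul_const (xs - P t)).const_add (P t)
      exact ((hGVd _).hasFDerivAt).comp_hasDerivAt s h1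
    have hcont : Continuous fun s : ℝ =>
        (fderiv ℝ (gradient V) (P t + s • (xs - P t))) (xs - P t) := by
      apply Continuous.clm_apply _ continuous_const
      exact hDGVc.comp (by fun_prop)
    have hFTC := integral_eq_sub_of_hasDerivAt (a := (0:ℝ)) (b := 1)
      (fun s _ => hline s) (hcont.intervalIntegrable 0 1)
    simp only [one_smul, zero_smul, add_zero, add_sub_cancel] at hFTC
    rw [← hFTC]
    have heq : ∀ s : ℝ, (fderiv ℝ (gradient V) (P t + s • (xs - P t))) (xs - P t)
        = (fderiv ℝ (gradient V) (s • xs + (1 - s) • P t))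
            (∫ τ in (0:ℝ)..t, (gradient U (Q τ) - g))
          + (t - η / 2) • ((fderiv ℝ (gradient V) (s • xs + (1 - s) • P t)) g) := by
      intro s
      have hc : P t + s • (xs - P t) = s • xs + (1 - s) • P t := by module
      rw [hc, hI t ht, map_add, _root_.map_smul]
    rw [intervalIntegral.integral_congr (g := fun s =>
      (fderiv ℝ (gradient V) (s • xs + (1 - s) • P t))
        (∫ τ in (0:ℝ)..t, (gradient U (Q τ) - g))
      + (t - η / 2) • ((fderiv ℝ (gradient V) (s • xs + (1 - s) • P t)) g))
      (fun s _ => heq s)]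
    have hc1 : Continuous fun s : ℝ => (fderiv ℝ (gradient V) (s • xs + (1 - s) • P t))
        (∫ τ in (0:ℝ)..t, (gradient U (Q τ) - g)) := by
      apply Continuous.clm_apply _ continuous_const
      exact hDGVc.comp (by fun_prop)
    have hc2 : Continuous fun s : ℝ =>
        (t - η / 2) • ((fderiv ℝ (gradient V) (s • xs + (1 - s) • P t)) g) := by
      apply Continuous.fun_const_smul
      apply Continuous.clm_apply _ continuous_const
      exact hDGVc.comp (by fun_prop)
    rw [intervalIntegral.integral_add (hc1.intervalIntegrable 0 1)
      (hc2.intervalIntegrable 0 1), intervalIntegral.integral_smul]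
  -- main rearrangement
  have main1 : q + η • gradient V xs - Q η
      = ∫ t in (0:ℝ)..η, (gradient V xs - gradient V (P t)) := by
    rw [intervalIntegral.integral_sub intervalIntegrable_const hQint,
      intervalIntegral.integral_const, key1, sub_zero]
    abel
  -- extended continuous versions for integrability
  set Pe : ℝ → (EuclideanSpace ℝ (Fin d)) := fun t => P (projIcc 0 η h0η t) with hPedef
  have hPec : Continuous Pe :=
    hPc.comp_continuous (continuous_subtype_val.comp continuous_projIcc)
      (fun x => (projIcc 0 η h0η x).2)
  have hPee : ∀ t ∈ Icc (0:ℝ) η, Pe t = P t := by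
    intro t ht; simp [hPedef, projIcc_of_mem h0η ht]
  set Qe : ℝ → (EuclideanSpace ℝ (Fin d)) := fun t => Q (projIcc 0 η h0η t) with hQedef
  have hQec : Continuous Qe :=
    hQc.comp_continuous (continuous_subtype_val.comp continuous_projIcc)
      (fun x => (projIcc 0 η h0η x).2)
  have hQee : ∀ t ∈ Icc (0:ℝ) η, Qe t = Q t := by
    intro t ht; simp [hQedef, projIcc_of_mem h0η ht]
  set Ie : ℝ → (EuclideanSpace ℝ (Fin d)) := fun t => ∫ τ in (0:ℝ)..t, (gradient U (Qe τ) - g) with hIedef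
  have hIec : Continuous Ie :=
    intervalIntegral.continuous_primitive
      (fun a b => (((hGU.comp hQec).sub continuous_const)).intervalIntegrable a b) 0
  have hIee : ∀ t ∈ Icc (0:ℝ) η,
      Ie t = ∫ τ in (0:ℝ)..t, (gradient U (Q τ) - g) := by
    intro t ht
    apply intervalIntegral.integral_congr
    intro τ hτ
    rw [uIcc_of_le ht.1] at hτ
    have hτ' : τ ∈ Icc (0:ℝ) η := ⟨hτ.1, hτ.2.trans ht.2⟩
    simp only [hQee τ hτ']
  -- integrability of the two t-integrands
  have hFe : Continuous (fun t => ∫ s in (0:ℝ)..1,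
      (fderiv ℝ (gradient V) (s • xs + (1 - s) • Pe t)) (Ie t)) := by
    apply intervalIntegral.continuous_parametric_intervalIntegral_of_continuous'
    apply Continuous.clm_apply
    · exact hDGVc.comp (by fun_prop)
    · exact hIec.comp continuous_fst
  have hFint : IntervalIntegrable (fun t => ∫ s in (0:ℝ)..1,
      (fderiv ℝ (gradient V) (s • xs + (1 - s) • P t))
        (∫ τ in (0:ℝ)..t, (gradient U (Q τ) - g))) volume 0 η := by
    apply ContinuousOn.intervalIntegrable
    rw [huIcc]
    exact (hFe.continuousOn).congr
      (fun t ht => by simp only [hPee t ht, hIee t ht])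
  have hGecont : Continuous (fun t => ∫ s in (0:ℝ)..1,
      (fderiv ℝ (gradient V) (s • xs + (1 - s) • Pe t)) g) := by
    apply intervalIntegral.continuous_parametric_intervalIntegral_of_continuous'
    apply Continuous.clm_apply _ continuous_const
    exact hDGVc.comp (by fun_prop)
  have hGint : IntervalIntegrable (fun t => (t - η / 2) •
      ∫ s in (0:ℝ)..1, (fderiv ℝ (gradient V) (s • xs + (1 - s) • P t)) g) volume 0 η := by
    apply ContinuousOn.intervalIntegrable
    rw [huIcc]
    apply ContinuousOn.fun_smul (Continuous.continuousOn (by fun_prop))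
    exact (hGecont.continuousOn).congr (fun t ht => by simp only [hPee t ht])
  rw [main1]
  rw [intervalIntegral.integral_congr (g := fun t =>
      (∫ s in (0:ℝ)..1, (fderiv ℝ (gradient V) (s • xs + (1 - s) • P t))
        (∫ τ in (0:ℝ)..t, (gradient U (Q τ) - g)))
      + (t - η / 2) • (∫ s in (0:ℝ)..1, (fderiv ℝ (gradient V) (s • xs + (1 - s) • P t)) g))
      (fun t ht => pointeq t (huIcc ▸ ht))]
  rw [intervalIntegral.integral_add hFint hGint]
  rw [sub_eq_add_neg]
  congr 1
  -- Second term : Fubini + integration by parts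
  -- first push the scalar inside the inner integral
  rw [intervalIntegral.integral_congr (g := fun t =>
      ∫ s in (0:ℝ)..1, (t - η / 2) • (fderiv ℝ (gradient V) (s • xs + (1 - s) • P t)) g)
      (fun t _ => (intervalIntegral.integral_smul _ _).symm)]
  -- Fubini
  rw [interval_fubini h0η zero_le_one (by
    apply ContinuousOn.smul ((continuous_fst.sub continuous_const).continuousOn)
    apply ContinuousOn.clm_apply _ continuousOn_const
    apply hDGVc.comp_continuousOn
    apply ContinuousOn.add (Continuous.continuousOn (by fun_prop))
    exact (continuous_const.sub continuous_snd).continuousOn.smul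
      (hPc.comp continuous_fst.continuousOn (fun p hp => hp.1)))]
  -- integration by parts for each s
  have hIBP : ∀ s : ℝ,
      (∫ t in (0:ℝ)..η, (t - η / 2) • (fderiv ℝ (gradient V) (s • xs + (1 - s) • P t)) g)
        = ∫ τ in (0:ℝ)..η, -(((1 - s) * (τ / 2 * (η - τ))) • w s τ) := by
    intro s
    have hu : ∀ t : ℝ, HasDerivAt (fun t : ℝ => t ^ 2 / 2 - η * t / 2) (t - η / 2) t := by
      intro t
      have h := ((hasDerivAt_pow 2 t).div_const 2).sub
        (((hasDerivAt_id t).const_mul η).div_const 2)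
      refine h.congr_deriv ?_
      push_cast
      ring
    have hv : ∀ t ∈ Icc (0:ℝ) η,
        HasDerivAt (fun t => (fderiv ℝ (gradient V) (s • xs + (1 - s) • P t)) g)
          (-((1 - s) • ι
            (((T (s • xs + (1 - s) • P t)) (gradient U (Q t))) g))) t := by
      intro t ht
      have hc : HasDerivAt (fun t => s • xs + (1 - s) • P t)
          ((1 - s) • (-(gradient U (Q t)))) t :=
        ((hP' t ht).const_smul (1 - s)).const_add (s • xs)
      have h2 := (hΦdiff (s • xs + (1 - s) • P t)).comp_hasDerivAt t hc
      refine h2.congr_deriv ?_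
      simp only [ContinuousLinearMap.coe_comp', Function.comp_apply, _root_.map_smul, _root_.map_neg,
        ContinuousLinearMap.neg_apply, ContinuousLinearMap.smul_apply,
        ContinuousLinearMap.apply_apply, smul_neg]
      rfl
    -- continuity helpers on Icc 0 η
    have hcc : ContinuousOn (fun t => s • xs + (1 - s) • P t) (Icc 0 η) :=
      continuousOn_const.add (hPc.const_smul (1 - s))
    have hGUQ : ContinuousOn (fun t => gradient U (Q t)) (Icc 0 η) :=
      hGU.comp_continuousOn hQc
    have hvcont : ContinuousOn
        (fun t => (fderiv ℝ (gradient V) (s • xs + (1 - s) • P t)) g) (Icc 0 η) :=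
      (hDGVc.comp_continuousOn hcc).clm_apply continuousOn_const
    have hξc : ContinuousOn (fun t => ι
        (((T (s • xs + (1 - s) • P t)) (gradient U (Q t))) g)) (Icc 0 η) :=
      ι.continuous.comp_continuousOn
        (((hTc.comp_continuousOn hcc).clm_apply hGUQ).clm_apply continuousOn_const)
    have hv'cont : ContinuousOn (fun t => -((1 - s) • ι
        (((T (s • xs + (1 - s) • P t)) (gradient U (Q t))) g))) (Icc 0 η) :=
      (hξc.const_smul (1 - s)).neg
    have hint1 : IntervalIntegrable (fun t =>
        (t ^ 2 / 2 - η * t / 2) • (-((1 - s) • ι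
          (((T (s • xs + (1 - s) • P t)) (gradient U (Q t))) g)))
        + (t - η / 2) • (fderiv ℝ (gradient V) (s • xs + (1 - s) • P t)) g)
        volume 0 η := by
      apply ContinuousOn.intervalIntegrable
      rw [huIcc]
      exact ((Continuous.continuousOn (by fun_prop)).fun_smul hv'cont).add
        ((Continuous.continuousOn (by fun_prop)).fun_smul hvcont)
    have hint2 : IntervalIntegrable (fun t =>
        (t ^ 2 / 2 - η * t / 2) • (-((1 - s) • ι
          (((T (s • xs + (1 - s) • P t)) (gradient U (Q t))) g)))) volume 0 η := by
      apply ContinuousOn.intervalIntegrable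
      rw [huIcc]
      exact (Continuous.continuousOn (by fun_prop)).fun_smul hv'cont
    have hint3 : IntervalIntegrable (fun t =>
        (t - η / 2) • (fderiv ℝ (gradient V) (s • xs + (1 - s) • P t)) g) volume 0 η := by
      apply ContinuousOn.intervalIntegrable
      rw [huIcc]
      exact (Continuous.continuousOn (by fun_prop)).fun_smul hvcont
    have hprod : ∀ t ∈ uIcc (0:ℝ) η, HasDerivAt
        (fun t => (t ^ 2 / 2 - η * t / 2) •
          (fderiv ℝ (gradient V) (s • xs + (1 - s) • P t)) g)
        ((t ^ 2 / 2 - η * t / 2) • (-((1 - s) • ι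
          (((T (s • xs + (1 - s) • P t)) (gradient U (Q t))) g)))
        + (t - η / 2) • (fderiv ℝ (gradient V) (s • xs + (1 - s) • P t)) g) t := by
      intro t ht
      exact (hu t).smul (hv t (huIcc ▸ ht))
    have hFTC2 := integral_eq_sub_of_hasDerivAt hprod hint1
    have hzero : (∫ t in (0:ℝ)..η,
        ((t ^ 2 / 2 - η * t / 2) • (-((1 - s) • ι
          (((T (s • xs + (1 - s) • P t)) (gradient U (Q t))) g)))
        + (t - η / 2) • (fderiv ℝ (gradient V) (s • xs + (1 - s) • P t)) g)) = 0 := by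
      rw [hFTC2]
      rw [show (η ^ 2 / 2 - η * η / 2) = 0 by ring]
      norm_num
    rw [intervalIntegral.integral_add hint2 hint3] at hzero
    have hmain : (∫ t in (0:ℝ)..η,
        (t - η / 2) • (fderiv ℝ (gradient V) (s • xs + (1 - s) • P t)) g)
        = -∫ t in (0:ℝ)..η,
            (t ^ 2 / 2 - η * t / 2) • (-((1 - s) • ι
              (((T (s • xs + (1 - s) • P t)) (gradient U (Q t))) g))) := by
      rw [eq_neg_iff_add_eq_zero, add_comm]
      exact hzero
    rw [hmain, ← intervalIntegral.integral_neg]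
    apply intervalIntegral.integral_congr
    intro t _
    simp only [hwξ, smul_neg, smul_smul, neg_neg, ← neg_smul]
    congr 1
    ring
  rw [intervalIntegral.integral_congr (fun s _ => hIBP s)]
  simp only [intervalIntegral.integral_neg]
end
end

section
/- Let η > 0, let U : ℝ^d → ℝ be twice continuously differentiable, let V : ℝ^d → ℝ be continuously differentiable, let Q, P : [0, η] → ℝ^d be continuously differentiable and satisfy Q'(t) = ∇V(P(t)), P'(t) = −∇U(Q(t)), Q(0) = q, P(0) = p, and let q̂ = q + η∇V(p − (η/2)∇U(q)) and p̂ = p − (η/2)(∇U(q) + ∇U(q̂)) be the one-step leapfrog update. Then p̂ − P(η) = T₁ + T₂ + T₃ + T₄, where T₁ = ∫₀^η ∫₀^t [∇²U(Q(s)) − ∇²U(q + s∇V(p))] ∇V(P(s)) ds dt; T₂ = ∫₀^η ∫₀^t ∇²U(q + s∇V(p)) (∇V(P(s)) − ∇V(p)) ds dt; T₃ = ∫₀^η ∫₀^t ∇²U(q + s∇V(p)) ∇V(p) ds dt − (η/2) ∫₀^η ∇²U(q + s∇V(p)) ∇V(p) ds; and T₄ = (η²/2) ∫₀¹ ∇²U(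 (1−s)q̂ + s(q + η∇V(p)) ) ( ∇V(p) − ∇V(p − (η/2)∇U(q)) ) ds. -/
noncomputable section

open MeasureTheory intervalIntegral Set

set_option maxHeartbeats 1000000 in
/-- Exact four-term decomposition of the momentum error of one leapfrog step versus the
exact Hamiltonian flow. -/
theorem stmt5 {d : ℕ} {η : ℝ} (hη : 0 < η)
    {U V : EuclideanSpace ℝ (Fin d) → ℝ}
    (hU : ContDiff ℝ 2 U) (hV : ContDiff ℝ 1 V)
    (q p : EuclideanSpace ℝ (Fin d))
    (Q P : ℝ → EuclideanSpace ℝ (Fin d))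
    (hQ' : ∀ t ∈ Set.Icc (0:ℝ) η, HasDerivAt Q (gradient V (P t)) t)
    (hP' : ∀ t ∈ Set.Icc (0:ℝ) η, HasDerivAt P (-(gradient U (Q t))) t)
    (hQ0 : Q 0 = q) (hP0 : P 0 = p) :
    (p - (η / 2) • (gradient U q
        + gradient U (q + η • gradient V (p - (η / 2) • gradient U q)))) - P η
      = (∫ t in (0:ℝ)..η, ∫ s in (0:ℝ)..t,
            (fderiv ℝ (gradient U) (Q s) - fderiv ℝ (gradient U) (q + s • gradient V p))
              (gradient V (P s)))
        + (∫ t in (0:ℝ)..η, ∫ s in (0:ℝ)..t,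
            (fderiv ℝ (gradient U) (q + s • gradient V p))
              (gradient V (P s) - gradient V p))
        + ((∫ t in (0:ℝ)..η, ∫ s in (0:ℝ)..t,
              (fderiv ℝ (gradient U) (q + s • gradient V p)) (gradient V p))
            - (η / 2) • ∫ s in (0:ℝ)..η,
                (fderiv ℝ (gradient U) (q + s • gradient V p)) (gradient V p))
        + (η ^ 2 / 2) • ∫ s in (0:ℝ)..1,
            (fderiv ℝ (gradient U)
                ((1 - s) • (q + η • gradient V (p - (η / 2) • gradient U q))
                  + s • (q + η • gradient V p)))
              (gradient V p - gradient V (p - (η / 2) • gradient U q)) := by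
  have h0η : (0:ℝ) ≤ η := hη.le
  have huIcc : Set.uIcc (0:ℝ) η = Set.Icc 0 η := Set.uIcc_of_le h0η
  set g : EuclideanSpace ℝ (Fin d) → EuclideanSpace ℝ (Fin d) := gradient U with hgdef
  set gV : EuclideanSpace ℝ (Fin d) → EuclideanSpace ℝ (Fin d) := gradient V with hgVdef
  set v : EuclideanSpace ℝ (Fin d) := gV p with hvdef
  set w : EuclideanSpace ℝ (Fin d) := gV (p - (η / 2) • g q) with hwdef
  set Qh : EuclideanSpace ℝ (Fin d) := q + η • w with hQhdef
  set b : EuclideanSpace ℝ (Fin d) := q + η • v with hbdef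
  -- basic regularity
  have hgc : ContDiff ℝ 1 g := by
    have : g = fun x => (InnerProductSpace.toDual ℝ _).symm (fderiv ℝ U x) := rfl
    rw [this]
    exact (InnerProductSpace.toDual ℝ _).symm.contDiff.comp (hU.fderiv_right (by norm_num))
  have hgcont : Continuous g := hgc.continuous
  have hFcont : Continuous (fun x => fderiv ℝ g x) := hgc.continuous_fderiv one_ne_zero
  have hgd : ∀ x, HasFDerivAt g (fderiv ℝ g x) x :=
    fun x => (hgc.differentiable one_ne_zero x).hasFDerivAt
  have hgVcont : Continuous gV := by
    have : gV = fun x => (InnerProductSpace.toDual ℝ _).symm (fderiv ℝ V x) := rfl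
    rw [this]
    exact (InnerProductSpace.toDual ℝ _).symm.continuous.comp (hV.continuous_fderiv one_ne_zero)
  have hQc : ContinuousOn Q (Set.Icc 0 η) :=
    fun t ht => (hQ' t ht).continuousAt.continuousWithinAt
  have hPc : ContinuousOn P (Set.Icc 0 η) :=
    fun t ht => (hP' t ht).continuousAt.continuousWithinAt
  -- inner integrand continuity
  have hkc : ContinuousOn (fun s => (fderiv ℝ g (Q s)) (gV (P s))) (Set.Icc 0 η) :=
    (hFcont.comp_continuousOn hQc).clm_apply (hgVcont.comp_continuousOn hPc)
  have hlinec : Continuous (fun s : ℝ => q + s • v) :=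
    continuous_const.add (continuous_id.smul continuous_const)
  have hk1c : ContinuousOn
      (fun s => (fderiv ℝ g (Q s) - fderiv ℝ g (q + s • v)) (gV (P s))) (Set.Icc 0 η) :=
    ((hFcont.comp_continuousOn hQc).sub
      ((hFcont.comp hlinec).continuousOn)).clm_apply (hgVcont.comp_continuousOn hPc)
  have hk2c : ContinuousOn
      (fun s => (fderiv ℝ g (q + s • v)) (gV (P s) - v)) (Set.Icc 0 η) :=
    ((hFcont.comp hlinec).continuousOn).clm_apply
      ((hgVcont.comp_continuousOn hPc).sub continuousOn_const)
  have hk3c : Continuous (fun s : ℝ => (fderiv ℝ g (q + s • v)) v) :=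
    (hFcont.comp hlinec).clm_apply continuous_const
  -- Step A : ∫ g (Q t) = p - P η
  have hA : (∫ t in (0:ℝ)..η, g (Q t)) = p - P η := by
    have hint : IntervalIntegrable (fun t => -(g (Q t))) volume 0 η := by
      apply ContinuousOn.intervalIntegrable
      rw [huIcc]
      exact (hgcont.comp_continuousOn hQc).neg
    have h := integral_eq_sub_of_hasDerivAt (f := P) (f' := fun t => -(g (Q t)))
      (by rw [huIcc]; exact hP') hint
    rw [intervalIntegral.integral_neg, hP0, neg_eq_iff_eq_neg, neg_sub] at h
    exact h
  -- Step B : g (Q t) = g q + primitive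
  have hB : ∀ t ∈ Set.Icc (0:ℝ) η,
      g (Q t) = g q + ∫ s in (0:ℝ)..t, (fderiv ℝ g (Q s)) (gV (P s)) := by
    intro t ht
    have hsub : Set.uIcc (0:ℝ) t ⊆ Set.Icc 0 η := by
      rw [Set.uIcc_of_le ht.1]; exact Set.Icc_subset_Icc le_rfl ht.2
    have h := integral_eq_sub_of_hasDerivAt (f := fun s => g (Q s))
      (f' := fun s => (fderiv ℝ g (Q s)) (gV (P s)))
      (fun s hs => (hgd (Q s)).comp_hasDerivAt s (hQ' s (hsub hs)))
      ((hkc.mono hsub).intervalIntegrable)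
    rw [h]
    simp only [hQ0]
    abel
  -- primitive continuity helper
  have prim_cont : ∀ (f : ℝ → EuclideanSpace ℝ (Fin d)),
      ContinuousOn f (Set.Icc 0 η) →
      ContinuousOn (fun t => ∫ s in (0:ℝ)..t, f s) (Set.Icc 0 η) := by
    intro f hf
    have : IntegrableOn f (Set.uIcc 0 η) volume := by
      rw [huIcc]; exact hf.integrableOn_Icc
    simpa [huIcc] using intervalIntegral.continuousOn_primitive_interval this
  have hIc := prim_cont _ hkc
  -- Step C : ∫ g (Q t) = η • g q + D
  have hC : (∫ t in (0:ℝ)..η, g (Q t))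
      = η • g q + ∫ t in (0:ℝ)..η, ∫ s in (0:ℝ)..t, (fderiv ℝ g (Q s)) (gV (P s)) := by
    rw [integral_congr (g := fun t => g q + ∫ s in (0:ℝ)..t, (fderiv ℝ g (Q s)) (gV (P s)))
        (by rw [huIcc]; exact fun t ht => hB t ht),
      integral_add intervalIntegrable_const
        (by apply ContinuousOn.intervalIntegrable; rw [huIcc]; exact hIc),
      intervalIntegral.integral_const, sub_zero]
  have hPη : P η = p - (η • g q
      + ∫ t in (0:ℝ)..η, ∫ s in (0:ℝ)..t, (fderiv ℝ g (Q s)) (gV (P s))) := by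
    rw [← hC, hA]; abel
  -- Step D1 : line FTC from q to b
  have hlined : ∀ s : ℝ, HasDerivAt (fun s : ℝ => q + s • v) v s := by
    intro s
    simpa using ((hasDerivAt_id s).smul_const v).const_add q
  have hD1 : g b - g q = ∫ s in (0:ℝ)..η, (fderiv ℝ g (q + s • v)) v := by
    have h := integral_eq_sub_of_hasDerivAt (f := fun s => g (q + s • v))
      (f' := fun s => (fderiv ℝ g (q + s • v)) v)
      (a := 0) (b := η)
      (fun s _ => by exact (hgd (q + s • v)).comp_hasDerivAt s (hlined s))
      (hk3c.continuousOn.intervalIntegrable)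
    rw [h]
    simp [hbdef]
  have hgb : g b = g q + ∫ s in (0:ℝ)..η, (fderiv ℝ g (q + s • v)) v := by
    rw [← hD1]; abel
  -- Step D2 : segment FTC from Qh to b
  have hseg : ∀ s : ℝ, HasDerivAt (fun s : ℝ => Qh + s • (b - Qh)) (b - Qh) s := by
    intro s
    simpa using ((hasDerivAt_id s).smul_const (b - Qh)).const_add Qh
  have hsegc : Continuous (fun s : ℝ => Qh + s • (b - Qh)) :=
    continuous_const.add (continuous_id.smul continuous_const)
  have hD2 : g b - g Qh
      = ∫ s in (0:ℝ)..1, (fderiv ℝ g (Qh + s • (b - Qh))) (b - Qh) := by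
    have h := integral_eq_sub_of_hasDerivAt (f := fun s => g (Qh + s • (b - Qh)))
      (f' := fun s => (fderiv ℝ g (Qh + s • (b - Qh))) (b - Qh))
      (a := 0) (b := 1)
      (fun s _ => (hgd _).comp_hasDerivAt s (hseg s))
      (((hFcont.comp hsegc).clm_apply continuous_const).continuousOn.intervalIntegrable)
    rw [h]
    simp
  have hbQh : b - Qh = η • (v - w) := by
    rw [hbdef, hQhdef, smul_sub]; abel
  have hT4 : (η ^ 2 / 2) • (∫ s in (0:ℝ)..1,
        (fderiv ℝ g ((1 - s) • Qh + s • b)) (v - w))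
      = (η / 2) • (g b - g Qh) := by
    have hpt : ∀ s : ℝ, (1 - s) • Qh + s • b = Qh + s • (b - Qh) := by
      intro s; rw [sub_smul, one_smul, smul_sub]; abel
    have key : η • (∫ s in (0:ℝ)..1, (fderiv ℝ g ((1 - s) • Qh + s • b)) (v - w))
        = g b - g Qh := by
      rw [← intervalIntegral.integral_smul, hD2]
      apply integral_congr
      intro s _
      simp only
      rw [hpt s, hbQh, ContinuousLinearMap.map_smul]
    rw [show (η ^ 2 / 2 : ℝ) = (η / 2) * η by ring, ← smul_smul, key]
  -- Step E : telescoping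
  have hsub' : ∀ t ∈ Set.Icc (0:ℝ) η, Set.uIcc (0:ℝ) t ⊆ Set.Icc 0 η := by
    intro t ht
    rw [Set.uIcc_of_le ht.1]; exact Set.Icc_subset_Icc le_rfl ht.2
  have hsum : ∀ t ∈ Set.Icc (0:ℝ) η,
      (∫ s in (0:ℝ)..t, (fderiv ℝ g (Q s) - fderiv ℝ g (q + s • v)) (gV (P s)))
      + (∫ s in (0:ℝ)..t, (fderiv ℝ g (q + s • v)) (gV (P s) - v))
      + (∫ s in (0:ℝ)..t, (fderiv ℝ g (q + s • v)) v)
      = ∫ s in (0:ℝ)..t, (fderiv ℝ g (Q s)) (gV (P s)) := by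
    intro t ht
    have h1 := ((hk1c.mono (hsub' t ht)).intervalIntegrable (μ := volume))
    have h2 := ((hk2c.mono (hsub' t ht)).intervalIntegrable (μ := volume))
    have h3 := hk3c.continuousOn.intervalIntegrable (μ := volume) (a := 0) (b := t)
    rw [← integral_add h1 h2, ← integral_add (h1.add h2) h3]
    apply integral_congr
    intro s _
    simp only [ContinuousLinearMap.sub_apply, map_sub]
    abel
  have hE : (∫ t in (0:ℝ)..η, ∫ s in (0:ℝ)..t,
        (fderiv ℝ g (Q s) - fderiv ℝ g (q + s • v)) (gV (P s)))
      + (∫ t in (0:ℝ)..η, ∫ s in (0:ℝ)..t, (fderiv ℝ g (q + s • v)) (gV (P s) - v))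
      + (∫ t in (0:ℝ)..η, ∫ s in (0:ℝ)..t, (fderiv ℝ g (q + s • v)) v)
      = ∫ t in (0:ℝ)..η, ∫ s in (0:ℝ)..t, (fderiv ℝ g (Q s)) (gV (P s)) := by
    have i1 : IntervalIntegrable
        (fun t => ∫ s in (0:ℝ)..t, (fderiv ℝ g (Q s) - fderiv ℝ g (q + s • v)) (gV (P s)))
        volume 0 η := by
      apply ContinuousOn.intervalIntegrable; rw [huIcc]; exact prim_cont _ hk1c
    have i2 : IntervalIntegrable
        (fun t => ∫ s in (0:ℝ)..t, (fderiv ℝ g (q + s • v)) (gV (P s) - v))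
        volume 0 η := by
      apply ContinuousOn.intervalIntegrable; rw [huIcc]; exact prim_cont _ hk2c
    have i3 : IntervalIntegrable
        (fun t => ∫ s in (0:ℝ)..t, (fderiv ℝ g (q + s • v)) v) volume 0 η := by
      apply ContinuousOn.intervalIntegrable; rw [huIcc]
      exact prim_cont _ hk3c.continuousOn
    rw [← integral_add i1 i2, ← integral_add (i1.add i2) i3]
    apply integral_congr
    intro t ht
    exact hsum t (by rwa [← huIcc])
  rw [hT4, hPη, hgb, ← hE]
  module
end
end

section
/- Let d ≥ 1, 0 < ℓ_U ≤ L_U < ∞, 0 < ℓ_V ≤ L_V < ∞, and η > 0. Let U : ℝ^d → ℝ be twice continuously differentiable and of class S_{ℓ_U,L_U}, let V : ℝ^d → ℝ be continuously differentiable and of class S_{ℓ_V,L_V}, and let (q, p) be a random vector in ℝ^d × ℝ^d such that q has law μ, the probability measure with density proportional to e^{−U}. Set q̂ = q + η∇V(p − (η/2)∇U(q)). Then ( E‖ (η²/2) ∫₀¹ ∇²U( (1−s)q̂ + s(q + η∇V(p)) ) ( ∇V(p) − ∇V(p − (η/2)∇U(q)) ) ds ‖₂² )^{1/2} ≤ (L_U^{3/2}·L_V·(d+2)^{1/2}/4)·η³.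 -/
open MeasureTheory

noncomputable section

/-- The class `S_{ℓ,L}`: `ℓ`-strong convexity together with `L`-Lipschitz gradient. -/
def IsSClass (d : ℕ) (ℓ L : ℝ) (W : EuclideanSpace ℝ (Fin d) → ℝ) : Prop :=
  (∀ x₁ x₂ : EuclideanSpace ℝ (Fin d), ∀ t : ℝ, t ∈ Set.Icc (0:ℝ) 1 →
      W ((1 - t) • x₁ + t • x₂) ≤
        (1 - t) * W x₁ + t * W x₂ - ℓ / 2 * (t * (1 - t)) * ‖x₁ - x₂‖ ^ 2) ∧
  (∀ x₁ x₂ : EuclideanSpace ℝ (Fin d), ‖gradient W x₂ - gradient W x₁‖ ≤ L * ‖x₂ - x₁‖)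

/-- The probability measure on `ℝ^d` with density proportional to `e^{-U}`. -/
def gibbs (d : ℕ) (U : EuclideanSpace ℝ (Fin d) → ℝ) : Measure (EuclideanSpace ℝ (Fin d)) :=
  volume.withDensity (fun x => ENNReal.ofReal (Real.exp (-U x) / ∫ y, Real.exp (-U y)))

namespace S13

open Real Filter Set


variable {d : ℕ}

local notation "𝔼" => EuclideanSpace ℝ (Fin d)

lemma grad_inner (U : 𝔼 → ℝ) (x v : 𝔼) :
    @inner ℝ _ _ (gradient U x) v = fderiv ℝ U x v :=
  InnerProductSpace.toDual_symm_apply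

lemma strong_lower {ℓ : ℝ} {U : 𝔼 → ℝ}
    (hU : Differentiable ℝ U)
    (hsc : ∀ x₁ x₂ : 𝔼, ∀ t : ℝ, t ∈ Set.Icc (0:ℝ) 1 →
      U ((1 - t) • x₁ + t • x₂) ≤ (1 - t) * U x₁ + t * U x₂ - ℓ / 2 * (t * (1 - t)) * ‖x₁ - x₂‖ ^ 2)
    (x y : 𝔼) :
    U x + fderiv ℝ U x (y - x) + ℓ / 2 * ‖y - x‖ ^ 2 ≤ U y := by
  have hline : ∀ t : ℝ, (1 - t) • x + t • y = x + t • (y - x) := by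
    intro t; module
  have hder : HasDerivAt (fun t : ℝ => U (x + t • (y - x))) (fderiv ℝ U x (y - x)) 0 := by
    have h1 : HasDerivAt (fun t : ℝ => x + t • (y - x)) (y - x) 0 := by
      simpa using ((hasDerivAt_id (0:ℝ)).smul_const (y - x)).const_add x
    have := ((hU (x + (0:ℝ) • (y - x))).hasFDerivAt.comp_hasDerivAt 0 h1)
    simpa [Function.comp_def] using this
  have hslope : Tendsto (fun t : ℝ => (U (x + t • (y - x)) - U x) / t) (nhdsWithin 0 (Set.Ioi 0))
      (nhds (fderiv ℝ U x (y - x))) := by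
    have := hasDerivAt_iff_tendsto_slope.1 hder
    have h2 : Tendsto (slope (fun t : ℝ => U (x + t • (y - x))) 0) (nhdsWithin 0 (Set.Ioi 0))
        (nhds (fderiv ℝ U x (y - x))) :=
      this.mono_left (nhdsWithin_mono 0 (fun t ht => Set.mem_compl_singleton_iff.2 (ne_of_gt ht)))
    refine h2.congr' ?_
    filter_upwards [self_mem_nhdsWithin] with t ht
    simp [slope_def_field]
  have hconst : Tendsto (fun t : ℝ => U y - U x - ℓ / 2 * (1 - t) * ‖y - x‖ ^ 2)
      (nhdsWithin 0 (Set.Ioi 0)) (nhds (U y - U x - ℓ / 2 * ‖y - x‖ ^ 2)) := by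
    have hc : Continuous (fun t : ℝ => U y - U x - ℓ / 2 * (1 - t) * ‖y - x‖ ^ 2) := by
      fun_prop
    simpa using (hc.tendsto 0).mono_left nhdsWithin_le_nhds
  have hle : fderiv ℝ U x (y - x) ≤ U y - U x - ℓ / 2 * ‖y - x‖ ^ 2 := by
    refine le_of_tendsto_of_tendsto hslope hconst ?_
    filter_upwards [Ioc_mem_nhdsGT_of_mem (Set.left_mem_Ico.2 one_pos)] with t ht
    have h := hsc x y t ⟨le_of_lt ht.1, ht.2⟩
    rw [hline t] at h
    have ht0 : 0 < t := ht.1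
    rw [div_le_iff₀ ht0]
    have hnorm : ‖x - y‖ = ‖y - x‖ := norm_sub_rev x y
    rw [hnorm] at h
    ring_nf at h ⊢
    linarith
  linarith

/-- Quadratic-exponential upper bound for the Gibbs density. -/
lemma rho_bound {ℓ : ℝ} {U : 𝔼 → ℝ} (hℓ : 0 < ℓ)
    (hU : Differentiable ℝ U)
    (hsc : ∀ x₁ x₂ : 𝔼, ∀ t : ℝ, t ∈ Set.Icc (0:ℝ) 1 →
      U ((1 - t) • x₁ + t • x₂) ≤ (1 - t) * U x₁ + t * U x₂ - ℓ / 2 * (t * (1 - t)) * ‖x₁ - x₂‖ ^ 2)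
    (y : 𝔼) :
    Real.exp (-U y) ≤ Real.exp (‖fderiv ℝ U 0‖ ^ 2 / ℓ - U 0) * Real.exp (-(ℓ/4) * ‖y‖ ^ 2) := by
  rw [← Real.exp_add]
  apply Real.exp_le_exp.2
  have h := strong_lower hU hsc 0 y
  simp only [sub_zero] at h
  have hf : -(‖fderiv ℝ U 0‖ * ‖y‖) ≤ fderiv ℝ U 0 y := by
    have h2 := (fderiv ℝ U 0).le_opNorm y
    rw [Real.norm_eq_abs] at h2
    have h3 := neg_abs_le ((fderiv ℝ U 0) y)
    linarith
  have hquad : ‖fderiv ℝ U 0‖ * ‖y‖ ≤ ‖fderiv ℝ U 0‖ ^ 2 / ℓ + (ℓ/4) * ‖y‖ ^ 2 := by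
    rw [div_add' _ _ _ (ne_of_gt hℓ)]
    rw [le_div_iff₀ hℓ]
    nlinarith [sq_nonneg (‖fderiv ℝ U 0‖ - (ℓ/2) * ‖y‖)]
  nlinarith [h, hf, hquad]

lemma grad_bound {L : ℝ} {U : 𝔼 → ℝ}
    (hlip : ∀ x₁ x₂ : 𝔼, ‖gradient U x₂ - gradient U x₁‖ ≤ L * ‖x₂ - x₁‖) (z : 𝔼) :
    ‖gradient U z‖ ≤ ‖gradient U 0‖ + L * ‖z‖ := by
  have h := hlip 0 z
  simp only [sub_zero] at h
  calc ‖gradient U z‖ ≤ ‖gradient U 0‖ + ‖gradient U z - gradient U 0‖ := by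
        simpa using norm_add_le (gradient U 0) (gradient U z - gradient U 0)
    _ ≤ ‖gradient U 0‖ + L * ‖z‖ := by linarith

lemma integrable_gauss {a : ℝ} (ha : 0 < a) :
    Integrable (fun x : 𝔼 => Real.exp (-a * ‖x‖ ^ 2)) := by
  have h := (GaussianFourier.integrable_cexp_neg_mul_sq_norm_add (V := 𝔼)
      (b := (a : ℂ)) (by simpa using ha) 0 0).norm
  refine h.congr (Eventually.of_forall fun x => ?_)
  simp only [Complex.norm_exp]
  congr 1
  have : ((-a : ℂ) * (‖x‖:ℂ) ^ 2 + 0 * (inner ℝ (0 : 𝔼) x : ℝ)) = ((-a * ‖x‖^2 : ℝ) : ℂ) := by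
    push_cast; ring
  rw [this, Complex.ofReal_re]

lemma integrable_of_le_gauss {a : ℝ} {C : ℝ} {f : 𝔼 → ℝ} (ha : 0 < a)
    (hf : Continuous f) (hb : ∀ x, |f x| ≤ C * Real.exp (-a * ‖x‖ ^ 2)) :
    Integrable f := by
  refine Integrable.mono ((integrable_gauss (d := d) ha).const_mul C) hf.aestronglyMeasurable
      (Eventually.of_forall fun x => ?_)
  rw [Real.norm_eq_abs]
  exact le_trans (hb x) (le_abs_self _)

lemma poly_gauss_bound {a A B s : ℝ} (ha : 0 < a) (hs : 0 ≤ s) (hA : 0 ≤ A) (hB : 0 ≤ B) :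
    (A + B * s) ^ 2 * Real.exp (-a * s ^ 2) ≤
      (2 * A ^ 2 + 4 * B ^ 2 / a) * Real.exp (-(a/2) * s ^ 2) := by
  have h1 : (A + B * s) ^ 2 ≤ 2 * A ^ 2 + 2 * B ^ 2 * s ^ 2 := by nlinarith [sq_nonneg (A - B*s)]
  have he : Real.exp (-a * s ^ 2) = Real.exp (-(a/2) * s ^ 2) * Real.exp (-(a/2) * s ^ 2) := by
    rw [← Real.exp_add]; ring_nf
  have hs2 : s ^ 2 * Real.exp (-(a/2) * s ^ 2) ≤ 2 / a := by
    have hx : (a/2) * s ^ 2 ≤ Real.exp ((a/2) * s ^ 2) := by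
      have := Real.add_one_le_exp ((a/2) * s ^ 2); linarith
    have h3 : s ^ 2 ≤ 2/a * Real.exp ((a/2) * s ^ 2) := by
      rw [div_mul_eq_mul_div, le_div_iff₀ ha]; nlinarith
    have hz : (a/2) * s ^ 2 + (-(a/2) * s ^ 2) = 0 := by ring
    calc s ^ 2 * Real.exp (-(a/2) * s ^ 2)
        ≤ (2/a * Real.exp ((a/2) * s ^ 2)) * Real.exp (-(a/2) * s ^ 2) :=
          mul_le_mul_of_nonneg_right h3 (Real.exp_pos _).le
      _ = 2 / a := by rw [mul_assoc, ← Real.exp_add, hz, Real.exp_zero, mul_one]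
  have hexp : (0:ℝ) < Real.exp (-(a/2) * s ^ 2) := Real.exp_pos _
  calc (A + B * s) ^ 2 * Real.exp (-a * s ^ 2)
      ≤ (2 * A ^ 2 + 2 * B ^ 2 * s ^ 2) * Real.exp (-a * s ^ 2) := by
        apply mul_le_mul_of_nonneg_right h1 (Real.exp_pos _).le
    _ = 2 * A ^ 2 * Real.exp (-a * s ^ 2)
          + 2 * B ^ 2 * (s ^ 2 * Real.exp (-(a/2) * s ^ 2)) * Real.exp (-(a/2) * s ^ 2) := by
        rw [he]; ring
    _ ≤ 2 * A ^ 2 * Real.exp (-(a/2) * s ^ 2) + 2 * B ^ 2 * (2 / a) * Real.exp (-(a/2) * s ^ 2) := by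
        refine add_le_add (mul_le_mul_of_nonneg_left (Real.exp_le_exp.2 (by nlinarith)) (by positivity)) ?_
        exact mul_le_mul_of_nonneg_right (mul_le_mul_of_nonneg_left hs2 (by positivity)) hexp.le
    _ = (2 * A ^ 2 + 4 * B ^ 2 / a) * Real.exp (-(a/2) * s ^ 2) := by ring

lemma tendsto_poly_gauss {a : ℝ} (A B : ℝ) (ha : 0 < a) :
    Tendsto (fun s : ℝ => (A + B * s) * Real.exp (-a * s ^ 2)) atTop (nhds 0) := by
  have hat : Tendsto (fun s : ℝ => a * s) atTop atTop := tendsto_id.const_mul_atTop ha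
  have h1 : Tendsto (fun s : ℝ => Real.exp (-(a * s))) atTop (nhds 0) :=
    Real.tendsto_exp_atBot.comp (tendsto_neg_atTop_atBot.comp hat)
  have h3 : Tendsto (fun u : ℝ => u * Real.exp (-u)) atTop (nhds 0) := by
    simpa using tendsto_pow_mul_exp_neg_atTop_nhds_zero 1
  have h4 : Tendsto (fun s : ℝ => (a * s) * Real.exp (-(a * s))) atTop (nhds 0) := h3.comp hat
  have h2 : Tendsto (fun s : ℝ => s * Real.exp (-(a * s))) atTop (nhds 0) := by
    have h5 := h4.const_mul (1/a)
    rw [mul_zero] at h5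
    refine h5.congr fun s => ?_
    field_simp
  have h6 : Tendsto (fun s : ℝ => (|A| + |B| * s) * Real.exp (-(a * s))) atTop (nhds 0) := by
    have := (h1.const_mul |A|).add (h2.const_mul |B|)
    rw [mul_zero, mul_zero, add_zero] at this
    refine this.congr fun s => ?_
    ring
  refine squeeze_zero_norm' ?_ h6
  filter_upwards [eventually_ge_atTop (1:ℝ)] with s hs
  have hs0 : (0:ℝ) ≤ s := le_trans zero_le_one hs
  have habs : |A + B * s| ≤ |A| + |B| * s := by
    calc |A + B * s| ≤ |A| + |B * s| := abs_add_le _ _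
      _ = |A| + |B| * s := by rw [abs_mul, abs_of_nonneg hs0]
  have hexp : Real.exp (-a * s ^ 2) ≤ Real.exp (-(a * s)) := by
    apply Real.exp_le_exp.2
    nlinarith [mul_le_mul_of_nonneg_left hs (mul_nonneg ha.le hs0)]
  rw [Real.norm_eq_abs, abs_mul, abs_of_pos (Real.exp_pos _)]
  exact mul_le_mul habs hexp (Real.exp_pos _).le (by positivity)

lemma contDiff_gradient {U : 𝔼 → ℝ} (hU : ContDiff ℝ 2 U) : ContDiff ℝ 1 (gradient U) := by
  have h1 : ContDiff ℝ 1 (fderiv ℝ U) := hU.fderiv_right (by norm_num)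
  exact (InnerProductSpace.toDual ℝ 𝔼).symm.contDiff.comp h1

lemma hess_le {L : ℝ} {U : 𝔼 → ℝ} (hU : ContDiff ℝ 2 U) (hL : 0 ≤ L)
    (hlip : ∀ x₁ x₂ : 𝔼, ‖gradient U x₂ - gradient U x₁‖ ≤ L * ‖x₂ - x₁‖) (x : 𝔼) :
    ‖fderiv ℝ (gradient U) x‖ ≤ L := by
  have hdiff : DifferentiableAt ℝ (gradient U) x := ((contDiff_gradient hU).differentiable one_ne_zero) x
  have hlw : LipschitzWith (Real.toNNReal L) (gradient U) := by
    apply LipschitzWith.of_dist_le_mul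
    intro x₁ x₂
    rw [dist_eq_norm]
    simpa [Real.coe_toNNReal L hL, dist_eq_norm] using hlip x₂ x₁
  have h := hdiff.hasFDerivAt.le_of_lipschitz hlw
  rwa [Real.coe_toNNReal L hL] at h

lemma abs_coord_le (w : 𝔼) (i : Fin d) : |w i| ≤ ‖w‖ := by
  have h := norm_inner_le_norm (𝕜 := ℝ) w (EuclideanSpace.single i (1:ℝ))
  simpa [EuclideanSpace.inner_single_right] using h

lemma integrable_mul_rho {ℓ : ℝ} {U : 𝔼 → ℝ} (hℓ : 0 < ℓ) (hU : ContDiff ℝ 2 U)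
    (hsc : ∀ x₁ x₂ : 𝔼, ∀ t : ℝ, t ∈ Set.Icc (0:ℝ) 1 →
      U ((1 - t) • x₁ + t • x₂) ≤ (1 - t) * U x₁ + t * U x₂ - ℓ / 2 * (t * (1 - t)) * ‖x₁ - x₂‖ ^ 2)
    {g : 𝔼 → ℝ} (hg : Continuous g) {c₁ c₂ c₃ : ℝ} (hc₁ : 0 ≤ c₁) (hc₂ : 0 ≤ c₂) (hc₃ : 0 ≤ c₃)
    (hb : ∀ x, |g x| ≤ (c₁ + c₂ * ‖x‖) ^ 2 + c₃) :
    Integrable (fun x : 𝔼 => g x * Real.exp (-U x)) := by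
  have ha : (0:ℝ) < ℓ/4 := by linarith
  set K := Real.exp (‖fderiv ℝ U 0‖ ^ 2 / ℓ - U 0) with hK
  have hK0 : 0 < K := Real.exp_pos _
  refine integrable_of_le_gauss (a := ℓ/8) (C := ((2 * c₁ ^ 2 + 4 * c₂ ^ 2 / (ℓ/4)) + c₃) * K)
    (by linarith) (hg.mul (Real.continuous_exp.comp hU.continuous.neg)) (fun x => ?_)
  have hρ : Real.exp (-U x) ≤ K * Real.exp (-(ℓ/4) * ‖x‖ ^ 2) :=
    rho_bound hℓ (hU.differentiable (by norm_num)) hsc x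
  have h8 : (-(ℓ/8) * ‖x‖ ^ 2) = (-((ℓ/4)/2) * ‖x‖ ^ 2) := by ring
  calc |g x * Real.exp (-U x)| = |g x| * Real.exp (-U x) := by
        rw [abs_mul, abs_of_pos (Real.exp_pos _)]
    _ ≤ ((c₁ + c₂ * ‖x‖) ^ 2 + c₃) * (K * Real.exp (-(ℓ/4) * ‖x‖ ^ 2)) := by
        apply mul_le_mul (hb x) hρ (Real.exp_pos _).le
        positivity
    _ = ((c₁ + c₂ * ‖x‖) ^ 2 * Real.exp (-(ℓ/4) * ‖x‖ ^ 2)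
          + c₃ * Real.exp (-(ℓ/4) * ‖x‖ ^ 2)) * K := by ring
    _ ≤ ((2 * c₁ ^ 2 + 4 * c₂ ^ 2 / (ℓ/4)) * Real.exp (-((ℓ/4)/2) * ‖x‖ ^ 2)
          + c₃ * Real.exp (-((ℓ/4)/2) * ‖x‖ ^ 2)) * K := by
        apply mul_le_mul_of_nonneg_right _ hK0.le
        refine add_le_add (poly_gauss_bound ha (norm_nonneg x) hc₁ hc₂) ?_
        apply mul_le_mul_of_nonneg_left (Real.exp_le_exp.2 (by nlinarith [sq_nonneg ‖x‖])) hc₃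
    _ = ((2 * c₁ ^ 2 + 4 * c₂ ^ 2 / (ℓ/4)) + c₃) * K * Real.exp (-(ℓ/8) * ‖x‖ ^ 2) := by
        rw [h8]; ring

section IBP

variable {n : ℕ}

/-- Coordinate splitting of Euclidean space as a measurable equivalence. -/
def PhiE (n : ℕ) (i : Fin (n+1)) : EuclideanSpace ℝ (Fin (n+1)) ≃ᵐ ℝ × (Fin n → ℝ) :=
  (MeasurableEquiv.toLp 2 (Fin (n+1) → ℝ)).symm.trans
    (MeasurableEquiv.piFinSuccAbove (fun _ => ℝ) i)

lemma PhiE_mp (i : Fin (n+1)) :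
    MeasurePreserving (PhiE n i) volume
      ((volume : Measure ℝ).prod (volume : Measure (Fin n → ℝ))) := by
  have h2 := MeasureTheory.measurePreserving_piFinSuccAbove (fun _ : Fin (n+1) => (volume : Measure ℝ)) i
  have h1 := EuclideanSpace.volume_preserving_symm_measurableEquiv_toLp (Fin (n+1))
  have : MeasurePreserving (MeasurableEquiv.piFinSuccAbove (fun _ : Fin (n+1) => ℝ) i)
      (volume : Measure (Fin (n+1) → ℝ)) ((volume : Measure ℝ).prod (volume : Measure (Fin n → ℝ))) := by
    simp only [volume_pi]
    exact h2
  exact this.comp h1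

lemma PhiE_symm_line (i : Fin (n+1)) (t : ℝ) (y : Fin n → ℝ) :
    (PhiE n i).symm (t, y) = (PhiE n i).symm (0, y) + t • EuclideanSpace.single i (1:ℝ) := by
  ext k
  have happ : ∀ (t : ℝ), (PhiE n i).symm (t, y) k =
      (Fin.insertNth i t y : Fin (n+1) → ℝ) k := by
    intro t
    rfl
  rw [PiLp.add_apply, PiLp.smul_apply, happ, happ]
  simp only [smul_eq_mul]
  refine Fin.succAboveCases i ?_ ?_ k
  · simp [EuclideanSpace.single_apply]
  · intro j
    simp [EuclideanSpace.single_apply, Fin.succAbove_ne i j]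

variable {ℓ L : ℝ} {U : EuclideanSpace ℝ (Fin (n+1)) → ℝ}

lemma coord_ibp (hℓ : 0 < ℓ) (hL : 0 ≤ L) (hU : ContDiff ℝ 2 U)
    (hsc : ∀ x₁ x₂ : EuclideanSpace ℝ (Fin (n+1)), ∀ t : ℝ, t ∈ Set.Icc (0:ℝ) 1 →
      U ((1 - t) • x₁ + t • x₂) ≤ (1 - t) * U x₁ + t * U x₂ - ℓ / 2 * (t * (1 - t)) * ‖x₁ - x₂‖ ^ 2)
    (hlip : ∀ x₁ x₂ : EuclideanSpace ℝ (Fin (n+1)),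
      ‖gradient U x₂ - gradient U x₁‖ ≤ L * ‖x₂ - x₁‖)
    (i : Fin (n+1)) :
    ∫ x, ((gradient U x i) ^ 2
        - (fderiv ℝ (gradient U) x (EuclideanSpace.single i (1:ℝ))) i) * Real.exp (-U x) = 0 := by
  set v : EuclideanSpace ℝ (Fin (n+1)) := EuclideanSpace.single i (1:ℝ) with hv
  set A : ℝ := ‖gradient U 0‖ with hA
  set K : ℝ := Real.exp (‖fderiv ℝ U 0‖ ^ 2 / ℓ - U 0) with hKdef
  have hgc : Continuous (gradient U) := (contDiff_gradient hU).continuous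
  have hgd : Differentiable ℝ (gradient U) := (contDiff_gradient hU).differentiable one_ne_zero
  have hHc : Continuous (fderiv ℝ (gradient U)) :=
    (contDiff_gradient hU).continuous_fderiv one_ne_zero
  have hUd : Differentiable ℝ U := hU.differentiable (by norm_num)
  set F : EuclideanSpace ℝ (Fin (n+1)) → ℝ := fun x =>
    ((gradient U x i) ^ 2 - (fderiv ℝ (gradient U) x v) i) * Real.exp (-U x) with hF
  have hgradb : ∀ z, ‖gradient U z‖ ≤ A + L * ‖z‖ := fun z => grad_bound hlip z
  have hHb : ∀ z w, ‖fderiv ℝ (gradient U) z w‖ ≤ L * ‖w‖ := fun z w =>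
    le_trans ((fderiv ℝ (gradient U) z).le_opNorm w)
      (mul_le_mul_of_nonneg_right (hess_le hU hL hlip z) (norm_nonneg w))
  -- integrability of F
  have hFcont : Continuous fun x => (gradient U x i) ^ 2 - (fderiv ℝ (gradient U) x v) i := by
    apply Continuous.sub
    · exact (((EuclideanSpace.proj i).continuous.comp hgc)).pow 2
    · exact (EuclideanSpace.proj i).continuous.comp
        ((ContinuousLinearMap.apply ℝ (EuclideanSpace ℝ (Fin (n+1))) v).continuous.comp hHc)
  have hFint : Integrable F := by
    refine integrable_mul_rho (c₁ := A) (c₂ := L) (c₃ := L) hℓ hU hsc hFcont (norm_nonneg _) hL hL (fun x => ?_)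
    have h1 : |gradient U x i| ≤ A + L * ‖x‖ := le_trans (abs_coord_le _ i) (hgradb x)
    have h2 : |(fderiv ℝ (gradient U) x v) i| ≤ L := by
      refine le_trans (abs_coord_le _ i) (le_trans (hHb x v) ?_)
      simp [hv]
    have h3 : (gradient U x i) ^ 2 ≤ (A + L * ‖x‖) ^ 2 := by
      rw [← sq_abs]
      apply pow_le_pow_left₀ (abs_nonneg _) h1
    calc |(gradient U x i) ^ 2 - (fderiv ℝ (gradient U) x v) i|
        ≤ |(gradient U x i) ^ 2| + |(fderiv ℝ (gradient U) x v) i| := by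
          have h4 := abs_add_le ((gradient U x i) ^ 2) (-((fderiv ℝ (gradient U) x v) i))
          rw [abs_neg] at h4
          rw [sub_eq_add_neg]
          exact h4
      _ ≤ (A + L * ‖x‖) ^ 2 + L := by
          rw [abs_of_nonneg (sq_nonneg _)]
          exact add_le_add h3 h2
  -- transfer to the product space
  have mp := PhiE_mp (n := n) i
  have hemb : MeasurableEmbedding ((PhiE n i).symm) :=
    (PhiE n i).symm.measurableEmbedding
  have hFcomp : Integrable (fun z : ℝ × (Fin n → ℝ) => F ((PhiE n i).symm z))
      ((volume : Measure ℝ).prod (volume : Measure (Fin n → ℝ))) := by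
    have := (mp.symm (PhiE n i)).integrable_comp_emb hemb (g := F)
    exact this.2 hFint
  have h1 : ∫ x, F x = ∫ z : ℝ × (Fin n → ℝ), F ((PhiE n i).symm z)
      ∂((volume : Measure ℝ).prod (volume : Measure (Fin n → ℝ))) :=
    ((mp.symm (PhiE n i)).integral_comp' F).symm
  rw [h1, integral_prod_symm _ hFcomp]
  -- inner integrals vanish
  have hinner : ∀ᵐ y : Fin n → ℝ, ∫ t : ℝ, F ((PhiE n i).symm (t, y)) = 0 := by
    filter_upwards [hFcomp.prod_left_ae] with y hy
    set c : EuclideanSpace ℝ (Fin (n+1)) := (PhiE n i).symm (0, y) with hc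
    have hline : ∀ t : ℝ, (PhiE n i).symm (t, y) = c + t • v := fun t => PhiE_symm_line i t y
    have hy' : Integrable (fun t : ℝ => F (c + t • v)) := by
      refine hy.congr (Eventually.of_forall fun t => ?_)
      show F ((PhiE n i).symm (t, y)) = F (c + t • v)
      rw [hline t]
    set g : ℝ → ℝ := fun t => gradient U (c + t • v) i * Real.exp (-U (c + t • v)) with hg
    have hlct : ∀ t : ℝ, HasDerivAt (fun s : ℝ => c + s • v) v t := fun t => by
      simpa using ((hasDerivAt_id t).smul_const v).const_add c
    have hvnorm : ‖v‖ = 1 := by simp [hv]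
    have hfUg : ∀ z, fderiv ℝ U z v = gradient U z i := by
      intro z
      rw [← grad_inner U z v, hv, EuclideanSpace.inner_single_right]
      simp
    have key : ∀ t : ℝ, HasDerivAt g (-(F (c + t • v))) t := by
      intro t
      set z := c + t • v with hz
      have hgrad : HasDerivAt (fun s : ℝ => gradient U (c + s • v)) (fderiv ℝ (gradient U) z v) t :=
        by simpa [Function.comp_def] using (hgd z).hasFDerivAt.comp_hasDerivAt t (hlct t)
      have hGi : HasDerivAt (fun s : ℝ => gradient U (c + s • v) i)
          ((fderiv ℝ (gradient U) z v) i) t := by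
        have := (EuclideanSpace.proj (𝕜 := ℝ) i).hasFDerivAt.comp_hasDerivAt t hgrad
        simpa [Function.comp_def] using this
      have hUl : HasDerivAt (fun s : ℝ => U (c + s • v)) (gradient U z i) t := by
        have := (hUd z).hasFDerivAt.comp_hasDerivAt t (hlct t)
        rwa [hfUg z] at this
      have hrho : HasDerivAt (fun s : ℝ => Real.exp (-U (c + s • v)))
          (Real.exp (-U z) * -(gradient U z i)) t := hUl.neg.exp
      have := hGi.mul hrho
      refine this.congr_deriv ?_
      simp only [hF]
      ring
    -- tails
    have hKpos : (0:ℝ) < K := Real.exp_pos _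
    have hbound : ∀ t : ℝ, |g t| ≤ (A + L * ‖c + t • v‖) * (K * Real.exp (-(ℓ/4) * ‖c + t • v‖ ^ 2)) := by
      intro t
      rw [hg, abs_mul, abs_of_pos (Real.exp_pos _)]
      have h1' : |gradient U (c + t • v) i| ≤ A + L * ‖c + t • v‖ :=
        le_trans (abs_coord_le _ i) (hgradb _)
      have h2' : Real.exp (-U (c + t • v)) ≤ K * Real.exp (-(ℓ/4) * ‖c + t • v‖ ^ 2) :=
        rho_bound hℓ hUd hsc _
      apply mul_le_mul h1' h2' (Real.exp_pos _).le
      have := norm_nonneg (gradient U 0)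
      positivity
    have htail : Tendsto (fun s : ℝ => (A + L * s) * (K * Real.exp (-(ℓ/4) * s ^ 2))) atTop (nhds 0) := by
      have := (tendsto_poly_gauss (a := ℓ/4) A L (by linarith)).const_mul K
      rw [mul_zero] at this
      refine this.congr fun s => ?_
      ring
    have hnormtop : Tendsto (fun t : ℝ => ‖c + t • v‖) atTop atTop := by
      refine tendsto_atTop_mono (fun t => ?_) (tendsto_atTop_add_const_right _ (-‖c‖) tendsto_id)
      have h1' : ‖t • v‖ ≤ ‖c + t • v‖ + ‖c‖ := by
        calc ‖t • v‖ = ‖(c + t • v) - c‖ := by congr 1; abel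
          _ ≤ ‖c + t • v‖ + ‖c‖ := norm_sub_le _ _
      have h2' : |t| = ‖t • v‖ := by rw [norm_smul, hvnorm]; simp
      have := le_abs_self t
      simp only [id_eq]
      linarith
    have hnormbot : Tendsto (fun t : ℝ => ‖c + t • v‖) atBot atTop := by
      refine tendsto_atTop_mono (fun t => ?_) (tendsto_atTop_add_const_right _ (-‖c‖)
        tendsto_neg_atBot_atTop)
      have h1' : ‖t • v‖ ≤ ‖c + t • v‖ + ‖c‖ := by
        calc ‖t • v‖ = ‖(c + t • v) - c‖ := by congr 1; abel
          _ ≤ ‖c + t • v‖ + ‖c‖ := norm_sub_le _ _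
      have h2' : |t| = ‖t • v‖ := by rw [norm_smul, hvnorm]; simp
      have := neg_le_abs t
      linarith
    have htop : Tendsto g atTop (nhds 0) :=
      squeeze_zero_norm (fun t => hbound t) (htail.comp hnormtop)
    have hbot : Tendsto g atBot (nhds 0) :=
      squeeze_zero_norm (fun t => hbound t) (htail.comp hnormbot)
    have hzero : ∫ t : ℝ, -(F (c + t • v)) = 0 := by
      have := integral_of_hasDerivAt_of_tendsto key hy'.neg hbot htop
      simpa using this
    have : ∫ t : ℝ, F (c + t • v) = 0 := by
      rw [integral_neg] at hzero
      linarith [hzero]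
    rw [show (fun t : ℝ => F ((PhiE n i).symm (t, y))) = fun t => F (c + t • v) from
      funext fun t => by rw [hline t]]
    exact this
  calc ∫ y : Fin n → ℝ, ∫ t : ℝ, F ((PhiE n i).symm (t, y))
      = ∫ y : Fin n → ℝ, (0:ℝ) := integral_congr_ae hinner
    _ = 0 := integral_zero _ _

lemma norm_sq_eq_sum {m : ℕ} (w : EuclideanSpace ℝ (Fin m)) : ‖w‖ ^ 2 = ∑ j, (w j) ^ 2 := by
  rw [EuclideanSpace.norm_eq]
  rw [Real.sq_sqrt (by positivity)]
  congr 1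
  ext j
  rw [Real.norm_eq_abs, sq_abs]

lemma grad_sq_integral_le (hℓ : 0 < ℓ) (hL : 0 ≤ L) (hU : ContDiff ℝ 2 U)
    (hsc : ∀ x₁ x₂ : EuclideanSpace ℝ (Fin (n+1)), ∀ t : ℝ, t ∈ Set.Icc (0:ℝ) 1 →
      U ((1 - t) • x₁ + t • x₂) ≤ (1 - t) * U x₁ + t * U x₂ - ℓ / 2 * (t * (1 - t)) * ‖x₁ - x₂‖ ^ 2)
    (hlip : ∀ x₁ x₂ : EuclideanSpace ℝ (Fin (n+1)),
      ‖gradient U x₂ - gradient U x₁‖ ≤ L * ‖x₂ - x₁‖) :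
    ∫ x, ‖gradient U x‖ ^ 2 * Real.exp (-U x) ≤
      L * (n+1) * ∫ x, Real.exp (-U x) := by
  set A : ℝ := ‖gradient U 0‖ with hA
  have hgc : Continuous (gradient U) := (contDiff_gradient hU).continuous
  have hHc : Continuous (fderiv ℝ (gradient U)) :=
    (contDiff_gradient hU).continuous_fderiv one_ne_zero
  have hgradb : ∀ z, ‖gradient U z‖ ≤ A + L * ‖z‖ := fun z => grad_bound hlip z
  have hHb : ∀ z w, ‖fderiv ℝ (gradient U) z w‖ ≤ L * ‖w‖ := fun z w =>
    le_trans ((fderiv ℝ (gradient U) z).le_opNorm w)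
      (mul_le_mul_of_nonneg_right (hess_le hU hL hlip z) (norm_nonneg w))
  have hrho_int : Integrable (fun x : EuclideanSpace ℝ (Fin (n+1)) => Real.exp (-U x)) := by
    have := integrable_mul_rho (g := fun _ => (1:ℝ)) (c₁ := 0) (c₂ := 0) (c₃ := 1)
      hℓ hU hsc continuous_const le_rfl le_rfl zero_le_one (fun x => by norm_num)
    refine this.congr (Eventually.of_forall fun x => ?_)
    simp
  have hGint : ∀ i : Fin (n+1), Integrable
      (fun x => (gradient U x i) ^ 2 * Real.exp (-U x)) := by
    intro i
    refine integrable_mul_rho (c₁ := A) (c₂ := L) (c₃ := 0) hℓ hU hsc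
      ((((EuclideanSpace.proj i).continuous.comp hgc)).pow 2) (norm_nonneg _) hL le_rfl
      (fun x => ?_)
    have h1 : |gradient U x i| ≤ A + L * ‖x‖ := le_trans (abs_coord_le _ i) (hgradb x)
    rw [abs_of_nonneg (sq_nonneg _), add_zero, ← sq_abs]
    apply pow_le_pow_left₀ (abs_nonneg _) h1
  have hHint : ∀ i : Fin (n+1), Integrable
      (fun x => (fderiv ℝ (gradient U) x (EuclideanSpace.single i (1:ℝ))) i * Real.exp (-U x)) := by
    intro i
    refine integrable_mul_rho (c₁ := 0) (c₂ := 0) (c₃ := L) hℓ hU hsc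
      ((EuclideanSpace.proj i).continuous.comp
        ((ContinuousLinearMap.apply ℝ (EuclideanSpace ℝ (Fin (n+1)))
          (EuclideanSpace.single i (1:ℝ))).continuous.comp hHc)) le_rfl le_rfl hL (fun x => ?_)
    refine le_trans (abs_coord_le _ i) (le_trans (hHb x _) ?_)
    simp
  have hHabs : ∀ i : Fin (n+1), ∀ x,
      (fderiv ℝ (gradient U) x (EuclideanSpace.single i (1:ℝ))) i ≤ L := by
    intro i x
    refine le_trans (le_abs_self _) (le_trans (abs_coord_le _ i) (le_trans (hHb x _) ?_))
    simp
  have hii : ∀ i : Fin (n+1), ∫ x, (gradient U x i) ^ 2 * Real.exp (-U x)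
      = ∫ x, (fderiv ℝ (gradient U) x (EuclideanSpace.single i (1:ℝ))) i * Real.exp (-U x) := by
    intro i
    have h0 := coord_ibp hℓ hL hU hsc hlip i
    have hsplit : (fun x : EuclideanSpace ℝ (Fin (n+1)) => ((gradient U x i) ^ 2
        - (fderiv ℝ (gradient U) x (EuclideanSpace.single i (1:ℝ))) i) * Real.exp (-U x))
        = fun x => (gradient U x i) ^ 2 * Real.exp (-U x)
          - (fderiv ℝ (gradient U) x (EuclideanSpace.single i (1:ℝ))) i * Real.exp (-U x) := by
      funext x; ring
    rw [hsplit, integral_sub (hGint i) (hHint i)] at h0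
    linarith
  have hnorm : (fun x : EuclideanSpace ℝ (Fin (n+1)) => ‖gradient U x‖ ^ 2 * Real.exp (-U x))
      = fun x => ∑ i, (gradient U x i) ^ 2 * Real.exp (-U x) := by
    funext x
    rw [norm_sq_eq_sum, Finset.sum_mul]
  rw [hnorm, integral_finset_sum _ (fun i _ => hGint i)]
  have hle : ∀ i : Fin (n+1), ∫ x, (gradient U x i) ^ 2 * Real.exp (-U x)
      ≤ L * ∫ x, Real.exp (-U x) := by
    intro i
    rw [hii i, ← MeasureTheory.integral_const_mul]
    refine integral_mono (hHint i) (hrho_int.const_mul L) (fun x => ?_)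
    exact mul_le_mul_of_nonneg_right (hHabs i x) (Real.exp_pos _).le
  calc ∑ i : Fin (n+1), ∫ x, (gradient U x i) ^ 2 * Real.exp (-U x)
      ≤ ∑ _i : Fin (n+1), L * ∫ x, Real.exp (-U x) := Finset.sum_le_sum (fun i _ => hle i)
    _ = L * (n+1) * ∫ x, Real.exp (-U x) := by
        rw [Finset.sum_const, Finset.card_univ, Fintype.card_fin]
        push_cast
        ring

end IBP

end S13

open S13

/-- Mean-square bound for the term `T₄` in the decomposition of the leapfrog momentum
error, with the initial position distributed according to `μ`. -/
theorem stmt13 {d : ℕ} (hd : 1 ≤ d)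
    {ℓU LU ℓV LV η : ℝ}
    (hℓU : 0 < ℓU) (hLU : ℓU ≤ LU) (hℓV : 0 < ℓV) (hLV : ℓV ≤ LV) (hη : 0 < η)
    {U V : EuclideanSpace ℝ (Fin d) → ℝ}
    (hU : ContDiff ℝ 2 U) (hUS : IsSClass d ℓU LU U)
    (hV : ContDiff ℝ 1 V) (hVS : IsSClass d ℓV LV V)
    {Ω : Type*} [MeasurableSpace Ω] (ℙ : Measure Ω) [IsProbabilityMeasure ℙ]
    (q p : Ω → EuclideanSpace ℝ (Fin d))
    (hqp : Measurable fun ω => (q ω, p ω))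
    (hlawq : Measure.map q ℙ = gibbs d U) :
    Real.sqrt (∫ ω,
        ‖(η ^ 2 / 2) • ∫ s in (0:ℝ)..1,
            (fderiv ℝ (gradient U)
                ((1 - s) • (q ω + η • gradient V (p ω - (η / 2) • gradient U (q ω)))
                  + s • (q ω + η • gradient V (p ω))))
              (gradient V (p ω) - gradient V (p ω - (η / 2) • gradient U (q ω)))‖ ^ 2 ∂ℙ)
      ≤ LU ^ ((3:ℝ)/2) * LV * Real.sqrt ((d : ℝ) + 2) / 4 * η ^ 3 := by
  obtain ⟨n, rfl⟩ : ∃ n, d = n + 1 := ⟨d - 1, by omega⟩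
  have hLU0 : 0 < LU := lt_of_lt_of_le hℓU hLU
  have hLV0 : 0 < LV := lt_of_lt_of_le hℓV hLV
  obtain ⟨hUsc, hUlip⟩ := hUS
  obtain ⟨hVsc, hVlip⟩ := hVS
  have hq : Measurable q := measurable_fst.comp hqp
  have hgc : Continuous (gradient U) := (contDiff_gradient hU).continuous
  have hgradb : ∀ z, ‖gradient U z‖ ≤ ‖gradient U 0‖ + LU * ‖z‖ := fun z => grad_bound hUlip z
  -- integrability of the Gibbs density and positivity of the partition function
  have hrho_int : Integrable (fun x : EuclideanSpace ℝ (Fin (n+1)) => Real.exp (-U x)) := by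
    have := integrable_mul_rho (g := fun _ => (1:ℝ)) (c₁ := 0) (c₂ := 0) (c₃ := 1)
      hℓU hU hUsc continuous_const le_rfl le_rfl zero_le_one (fun x => by norm_num)
    refine this.congr (Filter.Eventually.of_forall fun x => ?_)
    simp
  have hZpos : 0 < ∫ y : EuclideanSpace ℝ (Fin (n+1)), Real.exp (-U y) := by
    refine (integral_pos_iff_support_of_nonneg (fun x => (Real.exp_pos _).le) hrho_int).2 ?_
    have hsupp : (Function.support fun x : EuclideanSpace ℝ (Fin (n+1)) => Real.exp (-U x))
        = Set.univ := by
      ext x; simp [Function.mem_support, (Real.exp_pos (-U x)).ne']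
    rw [hsupp]
    exact isOpen_univ.measure_pos volume ⟨0, trivial⟩
  set Z : ℝ := ∫ y : EuclideanSpace ℝ (Fin (n+1)), Real.exp (-U y) with hZdef
  have hgradsq_rho : Integrable
      (fun x : EuclideanSpace ℝ (Fin (n+1)) => ‖gradient U x‖ ^ 2 * Real.exp (-U x)) := by
    refine integrable_mul_rho (c₁ := ‖gradient U 0‖) (c₂ := LU) (c₃ := 0) hℓU hU hUsc
      (hgc.norm.pow 2) (norm_nonneg _) hLU0.le le_rfl (fun x => ?_)
    rw [abs_of_nonneg (sq_nonneg _), add_zero, ← sq_abs, abs_of_nonneg (norm_nonneg _)]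
    exact pow_le_pow_left₀ (norm_nonneg _) (hgradb x) 2
  have hdens_meas : Measurable
      (fun x : EuclideanSpace ℝ (Fin (n+1)) => Real.toNNReal (Real.exp (-U x) / Z)) :=
    ((hU.continuous.neg.rexp.div_const Z).measurable).real_toNNReal
  have hgibbs : gibbs (n+1) U = volume.withDensity
      (fun x => ((Real.toNNReal (Real.exp (-U x) / Z) : NNReal) : ENNReal)) := by
    simp only [gibbs, ENNReal.ofReal, hZdef]
  have hint_gibbs : Integrable (fun x => ‖gradient U x‖ ^ 2) (gibbs (n+1) U) := by
    rw [hgibbs]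
    rw [integrable_withDensity_iff (hdens_meas.coe_nnreal_ennreal)
      (Filter.Eventually.of_forall fun x => ENNReal.coe_lt_top)]
    refine (hgradsq_rho.mul_const Z⁻¹).congr (Filter.Eventually.of_forall fun x => ?_)
    have hnn : (0:ℝ) ≤ Real.exp (-U x) / Z := by positivity
    show ‖gradient U x‖ ^ 2 * Real.exp (-U x) * Z⁻¹ = _
    simp only [ENNReal.coe_toReal, Real.coe_toNNReal _ hnn]
    ring
  have hmom : ∫ x, ‖gradient U x‖ ^ 2 ∂(gibbs (n+1) U) ≤ LU * (n+1) := by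
    rw [hgibbs, integral_withDensity_eq_integral_smul hdens_meas]
    have hsm : (fun x : EuclideanSpace ℝ (Fin (n+1)) =>
        (Real.toNNReal (Real.exp (-U x) / Z)) • ‖gradient U x‖ ^ 2)
        = fun x => (‖gradient U x‖ ^ 2 * Real.exp (-U x)) * Z⁻¹ := by
      funext x
      rw [NNReal.smul_def, smul_eq_mul, Real.coe_toNNReal _ (by positivity)]
      ring
    rw [hsm, integral_mul_const]
    have hbase := grad_sq_integral_le hℓU hLU0.le hU hUsc hUlip
    rw [← hZdef] at hbase
    calc (∫ x, ‖gradient U x‖ ^ 2 * Real.exp (-U x)) * Z⁻¹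
        ≤ (LU * (n+1) * Z) * Z⁻¹ :=
          mul_le_mul_of_nonneg_right hbase (by positivity)
      _ = LU * (n+1) := by field_simp
  have hAESM : AEStronglyMeasurable (fun x : EuclideanSpace ℝ (Fin (n+1)) => ‖gradient U x‖ ^ 2)
      (Measure.map q ℙ) := (hgc.norm.pow 2).aestronglyMeasurable
  have hcomp_int : Integrable (fun ω => ‖gradient U (q ω)‖ ^ 2) ℙ := by
    have h := (integrable_map_measure hAESM hq.aemeasurable).1
    rw [hlawq] at h
    exact h hint_gibbs
  have hcomp_eq : ∫ ω, ‖gradient U (q ω)‖ ^ 2 ∂ℙ = ∫ x, ‖gradient U x‖ ^ 2 ∂(gibbs (n+1) U) := by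
    rw [← hlawq, integral_map hq.aemeasurable hAESM]
  set C : ℝ := LU * LV * η ^ 3 / 4 with hC
  have hC0 : 0 ≤ C := by positivity
  have hpt : ∀ ω : Ω,
      ‖(η ^ 2 / 2) • ∫ s in (0:ℝ)..1,
          (fderiv ℝ (gradient U)
              ((1 - s) • (q ω + η • gradient V (p ω - (η / 2) • gradient U (q ω)))
                + s • (q ω + η • gradient V (p ω))))
            (gradient V (p ω) - gradient V (p ω - (η / 2) • gradient U (q ω)))‖ ^ 2
        ≤ C ^ 2 * ‖gradient U (q ω)‖ ^ 2 := by
    intro ω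
    set Δ : EuclideanSpace ℝ (Fin (n+1)) :=
      gradient V (p ω) - gradient V (p ω - (η / 2) • gradient U (q ω)) with hΔ
    have hΔle : ‖Δ‖ ≤ LV * ((η/2) * ‖gradient U (q ω)‖) := by
      have h := hVlip (p ω - (η / 2) • gradient U (q ω)) (p ω)
      have hsub : p ω - (p ω - (η / 2) • gradient U (q ω)) = (η / 2) • gradient U (q ω) := by
        abel
      rw [hsub, norm_smul, Real.norm_eq_abs, abs_of_pos (by positivity : (0:ℝ) < η/2)] at h
      exact h
    have hIle : ‖∫ s in (0:ℝ)..1,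
        (fderiv ℝ (gradient U)
            ((1 - s) • (q ω + η • gradient V (p ω - (η / 2) • gradient U (q ω)))
              + s • (q ω + η • gradient V (p ω)))) Δ‖ ≤ LU * ‖Δ‖ := by
      have h := intervalIntegral.norm_integral_le_of_norm_le_const (C := LU * ‖Δ‖)
        (a := (0:ℝ)) (b := 1)
        (f := fun s => (fderiv ℝ (gradient U)
            ((1 - s) • (q ω + η • gradient V (p ω - (η / 2) • gradient U (q ω)))
              + s • (q ω + η • gradient V (p ω)))) Δ) ?_
      · simpa using h
      · intro s _
        refine le_trans ((fderiv ℝ (gradient U) _).le_opNorm Δ) ?_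
        exact mul_le_mul_of_nonneg_right (hess_le hU hLU0.le hUlip _) (norm_nonneg Δ)
    have hT : ‖(η ^ 2 / 2) • ∫ s in (0:ℝ)..1,
        (fderiv ℝ (gradient U)
            ((1 - s) • (q ω + η • gradient V (p ω - (η / 2) • gradient U (q ω)))
              + s • (q ω + η • gradient V (p ω)))) Δ‖ ≤ C * ‖gradient U (q ω)‖ := by
      rw [norm_smul, Real.norm_eq_abs, abs_of_pos (by positivity : (0:ℝ) < η ^ 2 / 2)]
      calc (η ^ 2 / 2) * ‖∫ s in (0:ℝ)..1, _‖
          ≤ (η ^ 2 / 2) * (LU * (LV * ((η/2) * ‖gradient U (q ω)‖))) := by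
            refine mul_le_mul_of_nonneg_left (le_trans hIle ?_) (by positivity)
            exact mul_le_mul_of_nonneg_left hΔle hLU0.le
        _ = C * ‖gradient U (q ω)‖ := by rw [hC]; ring
    calc ‖(η ^ 2 / 2) • ∫ s in (0:ℝ)..1, _‖ ^ 2 ≤ (C * ‖gradient U (q ω)‖) ^ 2 :=
          pow_le_pow_left₀ (norm_nonneg _) hT 2
      _ = C ^ 2 * ‖gradient U (q ω)‖ ^ 2 := by ring
  have hInt : (∫ ω, ‖(η ^ 2 / 2) • ∫ s in (0:ℝ)..1,
          (fderiv ℝ (gradient U)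
              ((1 - s) • (q ω + η • gradient V (p ω - (η / 2) • gradient U (q ω)))
                + s • (q ω + η • gradient V (p ω))))
            (gradient V (p ω) - gradient V (p ω - (η / 2) • gradient U (q ω)))‖ ^ 2 ∂ℙ)
      ≤ C ^ 2 * (LU * (n+1)) := by
    have h1 := integral_mono_of_nonneg
      (f := fun ω => ‖(η ^ 2 / 2) • ∫ s in (0:ℝ)..1,
          (fderiv ℝ (gradient U)
              ((1 - s) • (q ω + η • gradient V (p ω - (η / 2) • gradient U (q ω)))
                + s • (q ω + η • gradient V (p ω))))
            (gradient V (p ω) - gradient V (p ω - (η / 2) • gradient U (q ω)))‖ ^ 2)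
      (g := fun ω => C ^ 2 * ‖gradient U (q ω)‖ ^ 2)
      (Filter.Eventually.of_forall fun ω => sq_nonneg _)
      (hcomp_int.const_mul _)
      (Filter.Eventually.of_forall hpt)
    rw [integral_const_mul] at h1
    refine le_trans h1 ?_
    refine mul_le_mul_of_nonneg_left ?_ (sq_nonneg C)
    rw [hcomp_eq]
    exact hmom
  refine le_trans (Real.sqrt_le_sqrt hInt) ?_
  have hsq : Real.sqrt (C ^ 2 * (LU * (n+1)))
      = C * (Real.sqrt LU * Real.sqrt ((n:ℝ)+1)) := by
    rw [Real.sqrt_mul (sq_nonneg C), Real.sqrt_sq hC0, Real.sqrt_mul hLU0.le]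
    try push_cast
    try ring_nf
  rw [hsq]
  have hrw : LU ^ ((3:ℝ)/2) = LU * Real.sqrt LU := by
    rw [show (3:ℝ)/2 = 1 + 1/2 by norm_num, Real.rpow_add hLU0, Real.rpow_one,
      Real.sqrt_eq_rpow]
  have hRHS : LU ^ ((3:ℝ)/2) * LV * Real.sqrt (((n+1 : ℕ) : ℝ) + 2) / 4 * η ^ 3
      = C * (Real.sqrt LU * Real.sqrt ((n:ℝ)+3)) := by
    rw [hrw, hC]
    push_cast
    rw [show (n:ℝ) + 1 + 2 = (n:ℝ) + 3 by ring]
    ring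
  rw [hRHS]
  refine mul_le_mul_of_nonneg_left ?_ hC0
  refine mul_le_mul_of_nonneg_left ?_ (Real.sqrt_nonneg _)
  exact Real.sqrt_le_sqrt (by linarith)
end
end
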